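/- arXiv:1507.03221 — 3 statements merged into one kernel-verified Lean document; each statement's English description precedes it below -/
import Mathlib

section
/- Let P and Q be finite posets with |P| = |Q| = d. Then the Ehrhart polynomials of Γ(O(P), −C(Q)) and Γ(C(P), −C(Q)) coincide: for every positive integer n, |n·Γ(O(P), −C(Q)) ∩ ℤ^d| = |n·Γ(C(P), −C(Q)) ∩ ℤ^d|. -/
open Set MeasureTheory Pointwise

def IsIdeal {d : ℕ} (P : PartialOrder (Fin d)) (I : Finset (Fin d)) : Prop :=
  ∀ i ∈ I, ∀ j, P.le j i → j ∈ I

def IsAC {d : ℕ} (P : PartialOrder (Fin d)) (A : Finset (Fin d)) : Prop :=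
  ∀ i ∈ A, ∀ j ∈ A, i ≠ j → ¬ P.le i j ∧ ¬ P.le j i

def rho {d : ℕ} (S : Finset (Fin d)) : Fin d → ℝ := fun i => if i ∈ S then 1 else 0

def IsLatticePt {d : ℕ} (x : Fin d → ℝ) : Prop := ∀ i, ∃ z : ℤ, x i = (z : ℝ)

def orderPolytope {d : ℕ} (P : PartialOrder (Fin d)) : Set (Fin d → ℝ) :=
  {x | (∀ i, 0 ≤ x i ∧ x i ≤ 1) ∧ ∀ i j : Fin d, P.le i j → x j ≤ x i}

def chainPolytope {d : ℕ} (P : PartialOrder (Fin d)) : Set (Fin d → ℝ) :=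
  {x | (∀ i, 0 ≤ x i) ∧
    ∀ c : Finset (Fin d), (∀ i ∈ c, ∀ j ∈ c, P.le i j ∨ P.le j i) →
      ∑ i ∈ c, x i ≤ 1}

def idealVerts {d : ℕ} (P : PartialOrder (Fin d)) : Set (Fin d → ℝ) :=
  {x | ∃ I : Finset (Fin d), IsIdeal P I ∧ x = rho I}

def acVerts {d : ℕ} (P : PartialOrder (Fin d)) : Set (Fin d → ℝ) :=
  {x | ∃ A : Finset (Fin d), IsAC P A ∧ x = rho A}

def GammaOO {d : ℕ} (P Q : PartialOrder (Fin d)) : Set (Fin d → ℝ) :=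
  convexHull ℝ (idealVerts P ∪ (fun v => -v) '' idealVerts Q)

def GammaOC {d : ℕ} (P Q : PartialOrder (Fin d)) : Set (Fin d → ℝ) :=
  convexHull ℝ (idealVerts P ∪ (fun v => -v) '' acVerts Q)

def GammaCC {d : ℕ} (P Q : PartialOrder (Fin d)) : Set (Fin d → ℝ) :=
  convexHull ℝ (acVerts P ∪ (fun v => -v) '' acVerts Q)

def IsLinExt {d : ℕ} (P : PartialOrder (Fin d)) (σ : Equiv.Perm (Fin d)) : Prop :=
  ∀ a b : Fin d, P.lt (σ a) (σ b) → a < b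

noncomputable def latCount {d : ℕ} (S : Set (Fin d → ℝ)) : ℕ :=
  Set.ncard {x ∈ S | IsLatticePt x}

def dil {d : ℕ} (n : ℕ) (S : Set (Fin d → ℝ)) : Set (Fin d → ℝ) := (n : ℝ) • S

def UnimodEquiv {d : ℕ} (S T : Set (Fin d → ℝ)) : Prop :=
  ∃ U : Matrix (Fin d) (Fin d) ℤ, IsUnit U.det ∧
    T = (fun v => (U.map (fun z : ℤ => (z : ℝ))).mulVec v) '' S

def IsLatticePolytope {d : ℕ} (S : Set (Fin d → ℝ)) : Prop :=
  ∃ V : Finset (Fin d → ℝ), (∀ v ∈ V, IsLatticePt v) ∧ S = convexHull ℝ ↑V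

def IsFanoPolytope {d : ℕ} (S : Set (Fin d → ℝ)) : Prop :=
  IsLatticePolytope S ∧ affineSpan ℝ S = ⊤ ∧ (0 : Fin d → ℝ) ∈ interior S ∧
    ∀ x ∈ interior S, IsLatticePt x → x = 0

def IsFacet {d : ℕ} (S F : Set (Fin d → ℝ)) : Prop :=
  IsExposed ℝ S F ∧ F.Nonempty ∧ F ≠ S ∧
    ∀ G : Set (Fin d → ℝ), IsExposed ℝ S G → G ≠ S → F ⊆ G → G = F

def IsZBasisSet {d : ℕ} (B : Set (Fin d → ℝ)) : Prop :=
  B.ncard = d ∧ (∀ x ∈ B, IsLatticePt x) ∧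
    ∀ y : Fin d → ℝ, y ∈ Submodule.span ℤ B ↔ IsLatticePt y

def IsSmoothFano {d : ℕ} (S : Set (Fin d → ℝ)) : Prop :=
  IsFanoPolytope S ∧ ∀ F, IsFacet S F → IsZBasisSet (Set.extremePoints ℝ F)

def IsSimplicialPolytope {d : ℕ} (S : Set (Fin d → ℝ)) : Prop :=
  ∀ F : Set (Fin d → ℝ), IsExposed ℝ S F → F ≠ S →
    ∃ V : Set (Fin d → ℝ), V.Finite ∧
      AffineIndependent ℝ ((↑) : V → (Fin d → ℝ)) ∧ F = convexHull ℝ V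

def seg {d : ℕ} (σ : Equiv.Perm (Fin d)) (k : Fin d) : Finset (Fin d) :=
  (Finset.Iic k).image σ

def unitVec (d : ℕ) (a : ℕ) : Fin d → ℝ := fun i => if (i : ℕ) = a then 1 else 0

def pairVec (d : ℕ) (a : ℕ) : Fin d → ℝ :=
  fun i => if (i : ℕ) = a ∨ (i : ℕ) = a + 1 then 1 else 0

def modelSplit (d k l m : ℕ) : Set (Fin d → ℝ) :=
  convexHull ℝ (
    {x | ∃ i : Fin d, x = unitVec d (i : ℕ) ∨ x = -unitVec d (i : ℕ)} ∪
    {x | ∃ i < k, x = pairVec d (2 * i) ∨ x = -pairVec d (2 * i)} ∪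
    {x | ∃ i < l, x = pairVec d (2 * k + 2 * i)} ∪
    {x | ∃ i < m, x = -pairVec d (2 * k + 2 * l + 2 * i)})

def chainOrd (d : ℕ) : PartialOrder (Fin d) := inferInstance

def vOrd (d : ℕ) : PartialOrder (Fin d) where
  le i j := i = j ∨ ((i : ℕ) < (j : ℕ) ∧ 2 ≤ (j : ℕ))
  lt i j := (i = j ∨ ((i : ℕ) < (j : ℕ) ∧ 2 ≤ (j : ℕ))) ∧
    ¬ (j = i ∨ ((j : ℕ) < (i : ℕ) ∧ 2 ≤ (i : ℕ)))
  lt_iff_le_not_ge i j := Iff.rfl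
  le_refl i := Or.inl rfl
  le_trans i j k hij hjk := by
    rcases hij with rfl | ⟨h1, h2⟩
    · exact hjk
    · rcases hjk with rfl | ⟨h3, h4⟩
      · exact Or.inr ⟨h1, h2⟩
      · exact Or.inr ⟨lt_trans h1 h3, h4⟩
  le_antisymm i j hij hji := by
    rcases hij with rfl | ⟨h1, h2⟩
    · rfl
    · rcases hji with h | ⟨h3, h4⟩
      · exact h.symm
      · exact absurd h3 (by omega)

open scoped Classical

section sands8
variable {d : ℕ}

-- basic fold-max facts
lemma s8_fold_nonneg {α : Type*} (s : Finset α) (f : α → ℝ) : 0 ≤ s.fold max 0 f :=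
  (Finset.le_fold_max _).2 (Or.inl le_rfl)

lemma s8_le_fold {α : Type*} {s : Finset α} {f : α → ℝ} {i : α} (h : i ∈ s) :
    f i ≤ s.fold max 0 f := (Finset.le_fold_max _).2 (Or.inr ⟨i, h, le_rfl⟩)

lemma s8_fold_eq_zero_or {α : Type*} {s : Finset α} {f : α → ℝ} :
    s.fold max 0 f = 0 ∨ ∃ i ∈ s, s.fold max 0 f = f i := by
  rcases (Finset.le_fold_max _).1 (le_refl (s.fold max 0 f)) with h | ⟨i, hi, h⟩
  · exact Or.inl (le_antisymm h (s8_fold_nonneg _ _))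
  · exact Or.inr ⟨i, hi, le_antisymm h (s8_le_fold hi)⟩

lemma s8_fold_le {α : Type*} {s : Finset α} {f : α → ℝ} {c : ℝ} (h0 : 0 ≤ c)
    (h : ∀ i ∈ s, f i ≤ c) : s.fold max 0 f ≤ c := (Finset.fold_max_le _).2 ⟨h0, h⟩

lemma s8_fold_mono_set {α : Type*} {s t : Finset α} (h : s ⊆ t) (f : α → ℝ) :
    s.fold max 0 f ≤ t.fold max 0 f :=
  s8_fold_le (s8_fold_nonneg _ _) fun i hi => s8_le_fold (h hi)

-- partial order helpers
lemma s8_ple_of_plt {P : PartialOrder (Fin d)} {a b : Fin d} (h : P.lt a b) : P.le a b :=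
  ((P.lt_iff_le_not_ge a b).1 h).1

lemma s8_not_ple_of_plt {P : PartialOrder (Fin d)} {a b : Fin d} (h : P.lt a b) : ¬ P.le b a :=
  ((P.lt_iff_le_not_ge a b).1 h).2

lemma s8_plt_of_ple_ne {P : PartialOrder (Fin d)} {a b : Fin d} (h : P.le a b) (hne : a ≠ b) :
    P.lt a b :=
  (P.lt_iff_le_not_ge a b).2 ⟨h, fun h' => hne (P.le_antisymm _ _ h h')⟩

lemma s8_plt_of_plt_of_ple {P : PartialOrder (Fin d)} {a b c : Fin d}
    (h1 : P.lt a b) (h2 : P.le b c) : P.lt a c := by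
  refine (P.lt_iff_le_not_ge a c).2 ⟨P.le_trans _ _ _ (s8_ple_of_plt h1) h2, fun h' => ?_⟩
  exact s8_not_ple_of_plt h1 (P.le_trans _ _ _ h2 h')

-- chains
noncomputable def s8chains (P : PartialOrder (Fin d)) : Finset (Finset (Fin d)) :=
  Finset.univ.powerset.filter (fun c => ∀ i ∈ c, ∀ j ∈ c, P.le i j ∨ P.le j i)

lemma s8_mem_chains {P : PartialOrder (Fin d)} {c : Finset (Fin d)} :
    c ∈ s8chains P ↔ ∀ i ∈ c, ∀ j ∈ c, P.le i j ∨ P.le j i := by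
  simp [s8chains]

lemma s8_singleton_mem_chains {P : PartialOrder (Fin d)} (i : Fin d) : {i} ∈ s8chains P := by
  rw [s8_mem_chains]
  intro a ha b hb
  simp only [Finset.mem_singleton] at ha hb
  subst ha; subst hb; exact Or.inl (P.le_refl _)

lemma s8_chains_subset {P : PartialOrder (Fin d)} {c c' : Finset (Fin d)}
    (hc : c ∈ s8chains P) (h : c' ⊆ c) : c' ∈ s8chains P := by
  rw [s8_mem_chains] at hc ⊢
  exact fun i hi j hj => hc i (h hi) j (h hj)

lemma s8_chain_min {P : PartialOrder (Fin d)} (c : Finset (Fin d))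
    (hc : c ∈ s8chains P) (hne : c.Nonempty) : ∃ m ∈ c, ∀ j ∈ c, P.le m j := by
  classical
  induction c using Finset.induction_on with
  | empty => exact absurd hne (by simp)
  | insert _ _ ha ih =>
    rename_i a s
    rcases s.eq_empty_or_nonempty with rfl | hs
    · exact ⟨a, by simp, by intro j hj; simp at hj; subst hj; exact P.le_refl _⟩
    · obtain ⟨m', hm', hall⟩ := ih (s8_chains_subset hc (Finset.subset_insert a s)) hs
      have hcc := s8_mem_chains.1 hc a (Finset.mem_insert_self a s) m'
        (Finset.mem_insert_of_mem hm')
      rcases hcc with h | h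
      · refine ⟨a, Finset.mem_insert_self a s, fun j hj => ?_⟩
        rcases Finset.mem_insert.1 hj with rfl | hj
        · exact P.le_refl _
        · exact P.le_trans _ _ _ h (hall j hj)
      · refine ⟨m', Finset.mem_insert_of_mem hm', fun j hj => ?_⟩
        rcases Finset.mem_insert.1 hj with rfl | hj
        · exact h
        · exact hall j hj

lemma s8_chain_max {P : PartialOrder (Fin d)} (c : Finset (Fin d))
    (hc : c ∈ s8chains P) (hne : c.Nonempty) : ∃ m ∈ c, ∀ j ∈ c, P.le j m := by
  classical
  induction c using Finset.induction_on with
  | empty => exact absurd hne (by simp)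
  | insert _ _ ha ih =>
    rename_i a s
    rcases s.eq_empty_or_nonempty with rfl | hs
    · exact ⟨a, by simp, by intro j hj; simp at hj; subst hj; exact P.le_refl _⟩
    · obtain ⟨m', hm', hall⟩ := ih (s8_chains_subset hc (Finset.subset_insert a s)) hs
      have hcc := s8_mem_chains.1 hc a (Finset.mem_insert_self a s) m'
        (Finset.mem_insert_of_mem hm')
      rcases hcc with h | h
      · refine ⟨m', Finset.mem_insert_of_mem hm', fun j hj => ?_⟩
        rcases Finset.mem_insert.1 hj with rfl | hj
        · exact h
        · exact hall j hj
      · refine ⟨a, Finset.mem_insert_self a s, fun j hj => ?_⟩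
        rcases Finset.mem_insert.1 hj with rfl | hj
        · exact P.le_refl _
        · exact P.le_trans _ _ _ (hall j hj) h

end sands8
section sands8b
variable {d : ℕ}

noncomputable def s8tmax (P : PartialOrder (Fin d)) (w : Fin d → ℝ) : ℝ :=
  (s8chains P).fold max 0 (fun c => ∑ i ∈ c, w i)

lemma s8_tmax_nonneg (P : PartialOrder (Fin d)) (w : Fin d → ℝ) : 0 ≤ s8tmax P w :=
  s8_fold_nonneg _ _

lemma s8_sum_le_tmax {P : PartialOrder (Fin d)} {w : Fin d → ℝ} {c : Finset (Fin d)}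
    (hc : c ∈ s8chains P) : ∑ i ∈ c, w i ≤ s8tmax P w :=
  s8_le_fold (f := fun c => ∑ i ∈ c, w i) hc

lemma s8_single_le_tmax {P : PartialOrder (Fin d)} {w : Fin d → ℝ} (i : Fin d) :
    w i ≤ s8tmax P w := by
  have := s8_sum_le_tmax (P := P) (w := w) (s8_singleton_mem_chains i)
  simpa using this

lemma s8_tmax_le {P : PartialOrder (Fin d)} {w : Fin d → ℝ} {t : ℝ} (h0 : 0 ≤ t)
    (h : ∀ c ∈ s8chains P, ∑ i ∈ c, w i ≤ t) : s8tmax P w ≤ t := s8_fold_le h0 h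

lemma s8_tmax_mono {P : PartialOrder (Fin d)} {v w : Fin d → ℝ} (h : ∀ i, v i ≤ w i) :
    s8tmax P v ≤ s8tmax P w := by
  refine s8_tmax_le (s8_tmax_nonneg _ _) fun c hc => ?_
  exact le_trans (Finset.sum_le_sum fun i _ => h i) (s8_sum_le_tmax hc)

noncomputable def s8ups (P : PartialOrder (Fin d)) (i : Fin d) : Finset (Fin d) :=
  Finset.univ.filter (fun j => P.lt i j)

noncomputable def s8upsle (P : PartialOrder (Fin d)) (i : Fin d) : Finset (Fin d) :=
  Finset.univ.filter (fun j => P.le i j)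

lemma s8_mem_ups {P : PartialOrder (Fin d)} {i j : Fin d} : j ∈ s8ups P i ↔ P.lt i j := by
  simp [s8ups]

lemma s8_mem_upsle {P : PartialOrder (Fin d)} {i j : Fin d} : j ∈ s8upsle P i ↔ P.le i j := by
  simp [s8upsle]

noncomputable def s8u (P : PartialOrder (Fin d)) (x : Fin d → ℝ) (i : Fin d) : ℝ :=
  (s8ups P i).fold max 0 x

noncomputable def s8p (P : PartialOrder (Fin d)) (x : Fin d → ℝ) (i : Fin d) : ℝ :=
  (s8upsle P i).fold max 0 x

noncomputable def s8s (P : PartialOrder (Fin d)) (x : Fin d → ℝ) : ℝ :=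
  Finset.univ.fold max 0 (s8p P x)

noncomputable def s8T (P : PartialOrder (Fin d)) (x : Fin d → ℝ) : Fin d → ℝ :=
  fun i => x i - s8u P x i

def s8pos (x : Fin d → ℝ) : Fin d → ℝ := fun i => max (x i) 0
def s8neg (x : Fin d → ℝ) : Fin d → ℝ := fun i => max (-x i) 0

lemma s8_u_nonneg (P : PartialOrder (Fin d)) (x : Fin d → ℝ) (i : Fin d) : 0 ≤ s8u P x i :=
  s8_fold_nonneg _ _

lemma s8_p_eq (P : PartialOrder (Fin d)) (x : Fin d → ℝ) (i : Fin d) :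
    s8p P x i = max (x i) (s8u P x i) := by
  have h : s8upsle P i = insert i (s8ups P i) := by
    ext j
    simp only [s8_mem_upsle, Finset.mem_insert, s8_mem_ups]
    constructor
    · intro h
      by_cases hij : j = i
      · exact Or.inl hij
      · exact Or.inr (s8_plt_of_ple_ne h (fun he => hij he.symm))
    · rintro (rfl | h)
      · exact P.le_refl _
      · exact s8_ple_of_plt h
  have hnot : i ∉ s8ups P i := by
    simp only [s8_mem_ups]
    intro h
    exact s8_not_ple_of_plt h (P.le_refl i)
  rw [s8p, h, Finset.fold_insert hnot]
  rfl

lemma s8_le_p_self (P : PartialOrder (Fin d)) (x : Fin d → ℝ) (i : Fin d) : x i ≤ s8p P x i := by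
  rw [s8_p_eq]; exact le_max_left _ _

lemma s8_p_nonneg (P : PartialOrder (Fin d)) (x : Fin d → ℝ) (i : Fin d) : 0 ≤ s8p P x i :=
  s8_fold_nonneg _ _

lemma s8_p_antitone {P : PartialOrder (Fin d)} (x : Fin d → ℝ) {i j : Fin d} (h : P.le i j) :
    s8p P x j ≤ s8p P x i := by
  refine s8_fold_mono_set (fun k hk => ?_) x
  rw [s8_mem_upsle] at hk ⊢
  exact P.le_trans _ _ _ h hk

lemma s8_p_le_s (P : PartialOrder (Fin d)) (x : Fin d → ℝ) (i : Fin d) :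
    s8p P x i ≤ s8s P x := s8_le_fold (Finset.mem_univ i)

lemma s8_s_nonneg (P : PartialOrder (Fin d)) (x : Fin d → ℝ) : 0 ≤ s8s P x :=
  s8_fold_nonneg _ _

lemma s8_s_le {P : PartialOrder (Fin d)} {x : Fin d → ℝ} {t : ℝ} (h0 : 0 ≤ t)
    (h : ∀ i, s8p P x i ≤ t) : s8s P x ≤ t := s8_fold_le h0 fun i _ => h i

-- E1 : qstar = negative part of T
lemma s8_q_eq_neg_T (P : PartialOrder (Fin d)) (x : Fin d → ℝ) :
    (fun i => s8p P x i - x i) = s8neg (s8T P x) := by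
  funext i
  rw [s8_p_eq, s8neg, s8T]
  rcases le_total (x i) (s8u P x i) with h | h
  · rw [max_eq_right h, max_eq_left (by linarith)]
    ring
  · rw [max_eq_left h, max_eq_right (by linarith)]
    ring

-- up-set induction
lemma s8_ups_ssubset {P : PartialOrder (Fin d)} {i k : Fin d} (h : k ∈ s8ups P i) :
    s8ups P k ⊂ s8ups P i := by
  rw [s8_mem_ups] at h
  constructor
  · intro j hj
    rw [s8_mem_ups] at hj ⊢
    exact s8_plt_of_plt_of_ple h (s8_ple_of_plt hj)
  · intro hsub
    have : k ∈ s8ups P k := hsub (s8_mem_ups.2 h)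
    rw [s8_mem_ups] at this
    exact s8_not_ple_of_plt this (P.le_refl k)

lemma s8_upInduction (P : PartialOrder (Fin d)) (motive : Fin d → Prop)
    (step : ∀ i, (∀ k ∈ s8ups P i, motive k) → motive i) : ∀ i, motive i := by
  have key : ∀ N (i : Fin d), (s8ups P i).card ≤ N → motive i := by
    intro N
    induction N with
    | zero =>
      intro i hi
      refine step i fun k hk => ?_
      rw [Finset.card_eq_zero.1 (Nat.le_zero.1 hi)] at hk
      exact absurd hk (Finset.notMem_empty k)
    | succ N ih =>
      intro i hi
      refine step i fun k hk => ih k ?_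
      have := Finset.card_lt_card (s8_ups_ssubset hk)
      omega
  exact fun i => key _ i le_rfl

end sands8b
section sands8c
variable {d : ℕ}

lemma s8_chain_insert {P : PartialOrder (Fin d)} {i k : Fin d} (hk : P.lt i k)
    {c' : Finset (Fin d)} (hc' : c' ∈ s8chains P) (hall' : ∀ j ∈ c', P.le k j) :
    insert i c' ∈ s8chains P ∧ (∀ j ∈ insert i c', P.le i j) := by
  have key : ∀ j ∈ insert i c', P.le i j := by
    intro j hj
    rcases Finset.mem_insert.1 hj with h | hj
    · subst h; exact P.le_refl _
    · exact P.le_trans _ _ _ (s8_ple_of_plt hk) (hall' j hj)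
  refine ⟨?_, key⟩
  rw [s8_mem_chains]
  intro a ha b hb
  by_cases hai : a = i
  · rw [hai]; exact Or.inl (key b hb)
  · by_cases hbi : b = i
    · rw [hbi]; exact Or.inr (key a ha)
    · exact s8_mem_chains.1 hc' a (Finset.mem_of_mem_insert_of_ne ha hai)
        b (Finset.mem_of_mem_insert_of_ne hb hbi)

lemma s8_pos_T_le_p (P : PartialOrder (Fin d)) (x : Fin d → ℝ) (i : Fin d) :
    s8pos (s8T P x) i ≤ s8p P x i := by
  rw [s8pos, s8T, s8_p_eq]
  have h1 := s8_u_nonneg P x i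
  rcases le_total (x i - s8u P x i) 0 with h | h
  · rw [max_eq_right h]
    exact le_max_of_le_right h1
  · rw [max_eq_left h]
    exact le_trans (by linarith) (le_max_left _ _)

-- chain-sum bound: E2a
lemma s8_chain_sum_le_p (P : PartialOrder (Fin d)) (x : Fin d → ℝ) :
    ∀ N (c : Finset (Fin d)), c.card ≤ N → c ∈ s8chains P →
      ∀ m ∈ c, (∀ j ∈ c, P.le m j) → ∑ i ∈ c, s8pos (s8T P x) i ≤ s8p P x m := by
  intro N
  induction N with
  | zero =>
    intro c hcard _ m hm _
    rw [Finset.card_eq_zero.1 (Nat.le_zero.1 hcard)] at hm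
    exact absurd hm (Finset.notMem_empty m)
  | succ N ih =>
    intro c hcard hc m hm hmin
    rcases (c.erase m).eq_empty_or_nonempty with he | hne
    · have hcm : c = {m} := by
        ext j
        constructor
        · intro hj
          by_cases hjm : j = m
          · simp [hjm]
          · exact absurd (Finset.mem_erase.2 ⟨hjm, hj⟩) (by simp [he])
        · intro hj
          simp only [Finset.mem_singleton] at hj
          subst hj; exact hm
      rw [hcm, Finset.sum_singleton]
      exact s8_pos_T_le_p P x m
    · obtain ⟨m', hm', hmin'⟩ := s8_chain_min (c.erase m)
        (s8_chains_subset hc (Finset.erase_subset _ _)) hne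
      have hm'c : m' ∈ c := Finset.mem_of_mem_erase hm'
      have hm'ne : m' ≠ m := Finset.ne_of_mem_erase hm'
      have hlt : P.lt m m' := s8_plt_of_ple_ne (hmin m' hm'c) (fun h => hm'ne h.symm)
      have hcard' : (c.erase m).card ≤ N := by
        have := Finset.card_erase_of_mem hm; omega
      have hIH := ih (c.erase m) hcard' (s8_chains_subset hc (Finset.erase_subset _ _)) m' hm' hmin'
      have hpu : s8p P x m' ≤ s8u P x m := by
        refine s8_fold_le (s8_u_nonneg P x m) fun j hj => ?_
        rw [s8_mem_upsle] at hj
        refine s8_le_fold (s8_mem_ups.2 ?_)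
        exact s8_plt_of_plt_of_ple hlt hj
      have hsum : ∑ i ∈ c, s8pos (s8T P x) i
          = s8pos (s8T P x) m + ∑ i ∈ c.erase m, s8pos (s8T P x) i :=
        (Finset.add_sum_erase c _ hm).symm
      rw [hsum, s8_p_eq]
      have h1 := s8_u_nonneg P x m
      rcases le_total (x m - s8u P x m) 0 with h | h
      · have : s8pos (s8T P x) m = 0 := by rw [s8pos, s8T]; exact max_eq_right h
        rw [this]
        have : s8u P x m ≤ max (x m) (s8u P x m) := le_max_right _ _
        linarith
      · have : s8pos (s8T P x) m = x m - s8u P x m := by rw [s8pos, s8T]; exact max_eq_left h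
        rw [this]
        have : x m ≤ max (x m) (s8u P x m) := le_max_left _ _
        linarith

lemma s8_tmax_posT_le_s (P : PartialOrder (Fin d)) (x : Fin d → ℝ) :
    s8tmax P (s8pos (s8T P x)) ≤ s8s P x := by
  refine s8_tmax_le (s8_s_nonneg P x) fun c hc => ?_
  rcases c.eq_empty_or_nonempty with rfl | hne
  · simpa using s8_s_nonneg P x
  · obtain ⟨m, hm, hmin⟩ := s8_chain_min c hc hne
    exact le_trans (s8_chain_sum_le_p P x c.card c le_rfl hc m hm hmin) (s8_p_le_s P x m)

-- E2b
lemma s8_exists_chain_T (P : PartialOrder (Fin d)) (x : Fin d → ℝ) :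
    ∀ i, ∃ c ∈ s8chains P, i ∈ c ∧ (∀ j ∈ c, P.le i j) ∧ x i ≤ ∑ j ∈ c, s8T P x j := by
  refine s8_upInduction P _ fun i IH => ?_
  rcases s8_fold_eq_zero_or (s := s8ups P i) (f := x) with h0 | ⟨k, hk, hke⟩
  · refine ⟨{i}, s8_singleton_mem_chains i, Finset.mem_singleton_self i, ?_, ?_⟩
    · intro j hj; simp only [Finset.mem_singleton] at hj; subst hj; exact P.le_refl _
    · rw [Finset.sum_singleton, s8T]
      have : s8u P x i = 0 := h0
      rw [this]; linarith
  · obtain ⟨c', hc', hkc', hall', hsum'⟩ := IH k hk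
    rw [s8_mem_ups] at hk
    have hinotc : i ∉ c' := by
      intro hic
      exact s8_not_ple_of_plt hk (hall' i hic)
    obtain ⟨hch2, hall2⟩ := s8_chain_insert hk hc' hall'
    refine ⟨insert i c', hch2, Finset.mem_insert_self i c', hall2, ?_⟩
    · rw [Finset.sum_insert hinotc]
      have : s8T P x i = x i - s8u P x i := rfl
      have hu : s8u P x i = x k := hke
      rw [this, hu]
      linarith

lemma s8_s_le_tmax_posT (P : PartialOrder (Fin d)) (x : Fin d → ℝ) :
    s8s P x ≤ s8tmax P (s8pos (s8T P x)) := by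
  have key : ∀ j, x j ≤ s8tmax P (s8pos (s8T P x)) := by
    intro j
    obtain ⟨c, hc, _, _, hsum⟩ := s8_exists_chain_T P x j
    refine le_trans hsum (le_trans (Finset.sum_le_sum fun i _ => ?_) (s8_sum_le_tmax hc))
    exact le_max_left _ _
  refine s8_s_le (s8_tmax_nonneg _ _) fun i => ?_
  exact s8_fold_le (s8_tmax_nonneg _ _) fun j _ => key j

lemma s8_s_eq_tmax (P : PartialOrder (Fin d)) (x : Fin d → ℝ) :
    s8s P x = s8tmax P (s8pos (s8T P x)) :=
  le_antisymm (s8_s_le_tmax_posT P x) (s8_tmax_posT_le_s P x)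

-- injectivity
lemma s8_T_injective (P : PartialOrder (Fin d)) : Function.Injective (s8T P) := by
  intro x x' h
  have key : ∀ i, x i = x' i := by
    refine s8_upInduction P _ fun i IH => ?_
    have hu : s8u P x i = s8u P x' i := Finset.fold_congr fun k hk => IH k hk
    have h1 : x i - s8u P x i = x' i - s8u P x' i := congrFun h i
    rw [hu] at h1
    linarith
  funext i; exact key i

-- inverse
noncomputable def s8chainsAt (P : PartialOrder (Fin d)) (i : Fin d) : Finset (Finset (Fin d)) :=
  (s8chains P).filter (fun c => i ∈ c ∧ ∀ j ∈ c, P.le i j)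

lemma s8_mem_chainsAt {P : PartialOrder (Fin d)} {i : Fin d} {c : Finset (Fin d)} :
    c ∈ s8chainsAt P i ↔ c ∈ s8chains P ∧ i ∈ c ∧ ∀ j ∈ c, P.le i j := by
  simp [s8chainsAt]

lemma s8_chainsAt_nonempty (P : PartialOrder (Fin d)) (i : Fin d) :
    (s8chainsAt P i).Nonempty := by
  refine ⟨{i}, s8_mem_chainsAt.2 ⟨s8_singleton_mem_chains i, Finset.mem_singleton_self i, ?_⟩⟩
  intro j hj; simp only [Finset.mem_singleton] at hj; subst hj; exact P.le_refl _

noncomputable def s8X (P : PartialOrder (Fin d)) (y : Fin d → ℝ) : Fin d → ℝ :=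
  fun i => (s8chainsAt P i).sup' (s8_chainsAt_nonempty P i) (fun c => ∑ j ∈ c, y j)

lemma s8_T_X (P : PartialOrder (Fin d)) (y : Fin d → ℝ) : s8T P (s8X P y) = y := by
  funext i
  have hyX : y i ≤ s8X P y i := by
    have hmem : ({i} : Finset (Fin d)) ∈ s8chainsAt P i :=
      s8_mem_chainsAt.2 ⟨s8_singleton_mem_chains i, Finset.mem_singleton_self i,
        fun j hj => by simp only [Finset.mem_singleton] at hj; subst hj; exact P.le_refl _⟩
    have h2 : (∑ j ∈ ({i} : Finset (Fin d)), y j) ≤ s8X P y i :=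
      Finset.le_sup' (f := fun c => ∑ j ∈ c, y j) hmem
    rwa [Finset.sum_singleton] at h2
  have hle : s8u P (s8X P y) i ≤ s8X P y i - y i := by
    refine s8_fold_le (by linarith) fun k hk => ?_
    rw [s8_mem_ups] at hk
    refine Finset.sup'_le _ _ fun c hc => ?_
    obtain ⟨hcch, hkc, hall⟩ := s8_mem_chainsAt.1 hc
    have hinotc : i ∉ c := fun hic => s8_not_ple_of_plt hk (hall i hic)
    have hmem : insert i c ∈ s8chainsAt P i := by
      obtain ⟨hch2, hall2⟩ := s8_chain_insert hk hcch hall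
      exact s8_mem_chainsAt.2 ⟨hch2, Finset.mem_insert_self i c, hall2⟩
    have hs := Finset.le_sup' (f := fun c => ∑ j ∈ c, y j) hmem
    rw [Finset.sum_insert hinotc] at hs
    have : y i + ∑ j ∈ c, y j ≤ s8X P y i := hs
    linarith
  have hge : s8X P y i - y i ≤ s8u P (s8X P y) i := by
    obtain ⟨c, hc, hceq⟩ := Finset.exists_mem_eq_sup' (s8_chainsAt_nonempty P i)
      (fun c => ∑ j ∈ c, y j)
    obtain ⟨hcch, hic, hall⟩ := s8_mem_chainsAt.1 hc
    have hXi : s8X P y i = ∑ j ∈ c, y j := hceq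
    rcases (c.erase i).eq_empty_or_nonempty with he | hne
    · have hcm : c = {i} := by
        ext j
        constructor
        · intro hj
          by_cases hji : j = i
          · simp [hji]
          · exact absurd (Finset.mem_erase.2 ⟨hji, hj⟩) (by simp [he])
        · intro hj
          simp only [Finset.mem_singleton] at hj; subst hj; exact hic
      have : s8X P y i = y i := by rw [hXi, hcm, Finset.sum_singleton]
      rw [this]
      simpa using s8_u_nonneg P (s8X P y) i
    · obtain ⟨m, hm, hmin⟩ := s8_chain_min (c.erase i)
        (s8_chains_subset hcch (Finset.erase_subset _ _)) hne
      have hmc : m ∈ c := Finset.mem_of_mem_erase hm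
      have hmne : m ≠ i := Finset.ne_of_mem_erase hm
      have hlt : P.lt i m := s8_plt_of_ple_ne (hall m hmc) (fun h => hmne h.symm)
      have hmemAt : c.erase i ∈ s8chainsAt P m :=
        s8_mem_chainsAt.2 ⟨s8_chains_subset hcch (Finset.erase_subset _ _), hm, hmin⟩
      have h1 : ∑ j ∈ c.erase i, y j ≤ s8X P y m :=
        Finset.le_sup' (f := fun c => ∑ j ∈ c, y j) hmemAt
      have h2 : s8X P y m ≤ s8u P (s8X P y) i := s8_le_fold (s8_mem_ups.2 hlt)
      have h3 : s8X P y i = y i + ∑ j ∈ c.erase i, y j := by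
        rw [hXi]
        exact (Finset.add_sum_erase c y hic).symm
      linarith
  have : s8u P (s8X P y) i = s8X P y i - y i := le_antisymm hle hge
  rw [s8T, this]; ring

-- lattice preservation
lemma s8_lattice_sum {y : Fin d → ℝ} (hy : IsLatticePt y) (c : Finset (Fin d)) :
    ∃ z : ℤ, ∑ j ∈ c, y j = (z : ℝ) := by
  choose g hg using hy
  refine ⟨∑ j ∈ c, g j, ?_⟩
  rw [Int.cast_sum]
  exact Finset.sum_congr rfl fun j _ => hg j

lemma s8_T_lattice {P : PartialOrder (Fin d)} {x : Fin d → ℝ} (hx : IsLatticePt x) :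
    IsLatticePt (s8T P x) := by
  intro i
  obtain ⟨zi, hzi⟩ := hx i
  rcases s8_fold_eq_zero_or (s := s8ups P i) (f := x) with h0 | ⟨k, _, hke⟩
  · refine ⟨zi, ?_⟩
    have : s8u P x i = 0 := h0
    rw [s8T, this, hzi]; ring
  · obtain ⟨zk, hzk⟩ := hx k
    refine ⟨zi - zk, ?_⟩
    have : s8u P x i = x k := hke
    rw [s8T, this, hzi, hzk]
    push_cast; ring

lemma s8_X_lattice {P : PartialOrder (Fin d)} {y : Fin d → ℝ} (hy : IsLatticePt y) :
    IsLatticePt (s8X P y) := by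
  intro i
  obtain ⟨c, _, hceq⟩ := Finset.exists_mem_eq_sup' (s8_chainsAt_nonempty P i)
    (fun c => ∑ j ∈ c, y j)
  obtain ⟨z, hz⟩ := s8_lattice_sum hy c
  have hXi : s8X P y i = ∑ j ∈ c, y j := hceq
  exact ⟨z, by rw [hXi, hz]⟩

end sands8c
section sands8d
variable {d : ℕ}

lemma s8_idealVerts_nonempty (P : PartialOrder (Fin d)) : (idealVerts P).Nonempty :=
  ⟨rho (∅ : Finset (Fin d)), ⟨∅, fun i hi => absurd hi (Finset.notMem_empty i), rfl⟩⟩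

lemma s8_acVerts_nonempty (P : PartialOrder (Fin d)) : (acVerts P).Nonempty :=
  ⟨rho (∅ : Finset (Fin d)), ⟨∅, fun i hi => absurd hi (Finset.notMem_empty i), rfl⟩⟩

lemma s8_convex_orderPolytope (P : PartialOrder (Fin d)) : Convex ℝ (orderPolytope P) := by
  rintro x ⟨hx1, hx2⟩ y ⟨hy1, hy2⟩ a b ha hb hab
  constructor
  · intro i
    have h1 := (hx1 i).1; have h2 := (hx1 i).2
    have h3 := (hy1 i).1; have h4 := (hy1 i).2
    have e : (a • x + b • y) i = a * x i + b * y i := rfl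
    constructor <;> rw [e] <;> nlinarith
  · intro i j hij
    have h1 := hx2 i j hij
    have h2 := hy2 i j hij
    have e1 : (a • x + b • y) i = a * x i + b * y i := rfl
    have e2 : (a • x + b • y) j = a * x j + b * y j := rfl
    rw [e1, e2]; nlinarith

lemma s8_convex_chainPolytope (P : PartialOrder (Fin d)) : Convex ℝ (chainPolytope P) := by
  rintro x ⟨hx1, hx2⟩ y ⟨hy1, hy2⟩ a b ha hb hab
  constructor
  · intro i
    have h1 := hx1 i; have h2 := hy1 i
    have e : (a • x + b • y) i = a * x i + b * y i := rfl
    rw [e]; nlinarith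
  · intro c hc
    have h1 := hx2 c hc
    have h2 := hy2 c hc
    have e : ∑ i ∈ c, (a • x + b • y) i = a * ∑ i ∈ c, x i + b * ∑ i ∈ c, y i := by
      rw [Finset.mul_sum, Finset.mul_sum, ← Finset.sum_add_distrib]
      rfl
    rw [e]; nlinarith

lemma s8_idealVerts_subset (P : PartialOrder (Fin d)) : idealVerts P ⊆ orderPolytope P := by
  rintro _ ⟨I, hI, rfl⟩
  constructor
  · intro i
    by_cases h : i ∈ I <;> simp [rho, h]
  · intro i j hij
    by_cases hj : j ∈ I
    · have hi : i ∈ I := hI j hj i hij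
      simp [rho, hi, hj]
    · by_cases hi : i ∈ I <;> simp [rho, hi, hj]

lemma s8_acVerts_subset (P : PartialOrder (Fin d)) : acVerts P ⊆ chainPolytope P := by
  rintro _ ⟨A, hA, rfl⟩
  constructor
  · intro i
    by_cases h : i ∈ A <;> simp [rho, h]
  · intro c hc
    have hcard : (c.filter (fun i => i ∈ A)).card ≤ 1 := by
      rw [Finset.card_le_one]
      intro a ha b hb
      rw [Finset.mem_filter] at ha hb
      by_contra hne
      rcases hc a ha.1 b hb.1 with h | h
      · exact (hA a ha.2 b hb.2 hne).1 h
      · exact (hA a ha.2 b hb.2 hne).2 h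
    have e : ∑ i ∈ c, rho A i = ((c.filter (fun i => i ∈ A)).card : ℝ) := by
      rw [Finset.card_filter]
      push_cast
      exact Finset.sum_congr rfl fun i _ => by by_cases h : i ∈ A <;> simp [rho, h]
    rw [e]
    exact_mod_cast hcard

lemma s8_orderPolytope_subset_hull (P : PartialOrder (Fin d)) :
    orderPolytope P ⊆ convexHull ℝ (idealVerts P) := by
  have key : ∀ N (y : Fin d → ℝ), y ∈ orderPolytope P →
      (Finset.univ.filter (fun i => y i ≠ 0)).card ≤ N → y ∈ convexHull ℝ (idealVerts P) := by
    intro N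
    induction N with
    | zero =>
      intro y hy hcard
      have hsupp : Finset.univ.filter (fun i => y i ≠ 0) = ∅ :=
        Finset.card_eq_zero.1 (Nat.le_zero.1 hcard)
      have hy0 : y = rho (∅ : Finset (Fin d)) := by
        funext i
        have h : i ∉ Finset.univ.filter (fun i => y i ≠ 0) := by simp [hsupp]
        simp only [Finset.mem_filter, Finset.mem_univ, true_and, not_not] at h
        simp [rho, h]
      rw [hy0]
      exact subset_convexHull ℝ _ ⟨∅, fun i hi => absurd hi (Finset.notMem_empty i), rfl⟩
    | succ N ih =>
      intro y hy hcard
      set I := Finset.univ.filter (fun i => y i ≠ 0) with hIdef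
      have hymem : ∀ i, i ∈ I ↔ y i ≠ 0 := by intro i; simp [hIdef]
      rcases I.eq_empty_or_nonempty with he | hne
      · have hy0 : y = rho (∅ : Finset (Fin d)) := by
          funext i
          have h : i ∉ I := by simp [he]
          rw [hymem, not_not] at h
          simp [rho, h]
        rw [hy0]
        exact subset_convexHull ℝ _ ⟨∅, fun i hi => absurd hi (Finset.notMem_empty i), rfl⟩
      · have hy0 : ∀ i, 0 ≤ y i := fun i => (hy.1 i).1
        have hy1 : ∀ i, y i ≤ 1 := fun i => (hy.1 i).2
        have hIideal : IsIdeal P I := by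
          intro i hi j hji
          rw [hymem] at hi ⊢
          have hmono := hy.2 j i hji
          intro h0
          rw [h0] at hmono
          exact hi (le_antisymm hmono (hy0 i))
        obtain ⟨i0, hi0, hlam⟩ := Finset.exists_mem_eq_inf' hne y
        set lam := I.inf' hne y with hlamdef
        have hlam_le : ∀ i ∈ I, lam ≤ y i := fun i hi => Finset.inf'_le y hi
        have hlam_pos : 0 < lam := by
          rcases lt_or_eq_of_le (hy0 i0) with h | h
          · rw [hlam]; exact h
          · exact absurd h.symm ((hymem i0).1 hi0)
        have hlam_le1 : lam ≤ 1 := by rw [hlam]; exact hy1 i0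
        have hIhull : rho I ∈ convexHull ℝ (idealVerts P) :=
          subset_convexHull ℝ _ ⟨I, hIideal, rfl⟩
        rcases eq_or_lt_of_le hlam_le1 with heq | hlt
        · have hyr : y = rho I := by
            funext i
            by_cases hi : i ∈ I
            · have h1 := hlam_le i hi
              rw [heq] at h1
              have h2 := hy1 i
              simp only [rho, hi, if_true]
              linarith
            · have h : y i = 0 := by
                by_contra h; exact hi ((hymem i).2 h)
              simp [rho, hi, h]
          rw [hyr]; exact hIhull
        · set y' : Fin d → ℝ := fun i => (1 - lam)⁻¹ * (y i - lam * rho I i) with hy'def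
          have h1lam : (0:ℝ) < 1 - lam := by linarith
          have hznotI : ∀ i, i ∉ I → y i = 0 := by
            intro i hi
            by_contra h; exact hi ((hymem i).2 h)
          have hy'mem : y' ∈ orderPolytope P := by
            constructor
            · intro i
              by_cases hi : i ∈ I
              · have h1 := hlam_le i hi
                have h2 := hy1 i
                simp only [hy'def, rho, hi, if_true, mul_one]
                constructor
                · apply mul_nonneg (by positivity); linarith
                · rw [inv_mul_le_iff₀ h1lam]; linarith
              · have h := hznotI i hi
                simp [hy'def, rho, hi, h]
            · intro i j hij
              have hmono := hy.2 i j hij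
              by_cases hj : j ∈ I
              · have hi : i ∈ I := hIideal j hj i hij
                simp only [hy'def, rho, hi, hj, if_true, mul_one]
                apply mul_le_mul_of_nonneg_left (by linarith) (by positivity)
              · have hyj := hznotI j hj
                simp only [hy'def, rho, hj, if_false, hyj, mul_zero, sub_zero, zero_sub,
                  mul_zero]
                by_cases hi : i ∈ I
                · simp only [rho, hi, if_true, mul_one]
                  have h1 := hlam_le i hi
                  have : (0:ℝ) ≤ (1 - lam)⁻¹ * (y i - lam) := by
                    apply mul_nonneg (by positivity); linarith
                  simpa using this
                · have hyi := hznotI i hi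
                  simp [rho, hi, hyi]
          have hsub : Finset.univ.filter (fun i => y' i ≠ 0) ⊆ I.erase i0 := by
            intro i hi
            simp only [Finset.mem_filter, Finset.mem_univ, true_and] at hi
            rw [Finset.mem_erase]
            have hiI : i ∈ I := by
              by_contra h
              exact hi (by simp [hy'def, rho, h, hznotI i h])
            refine ⟨?_, hiI⟩
            intro h
            subst h
            apply hi
            have : y i = lam := by rw [hlam]
            simp [hy'def, rho, hi0, this]
          have hcard' : (Finset.univ.filter (fun i => y' i ≠ 0)).card ≤ N := by
            have h1 := Finset.card_le_card hsub
            have h2 : (I.erase i0).card = I.card - 1 := Finset.card_erase_of_mem hi0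
            have h3 : I.card ≤ N + 1 := hcard
            have h4 : 0 < I.card := Finset.card_pos.2 hne
            omega
          have hy'hull := ih y' hy'mem hcard'
          have hcomb : y = lam • rho I + (1 - lam) • y' := by
            funext i
            have e : (lam • rho I + (1 - lam) • y') i
                = lam * rho I i + (1 - lam) * ((1 - lam)⁻¹ * (y i - lam * rho I i)) := rfl
            rw [e, ← mul_assoc, mul_inv_cancel₀ (ne_of_gt h1lam)]
            ring
          rw [hcomb]
          exact (convex_convexHull ℝ (idealVerts P)) hIhull hy'hull (le_of_lt hlam_pos)
            (by linarith) (by ring)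
  intro y hy
  exact key _ y hy le_rfl

lemma s8_hull_idealVerts (P : PartialOrder (Fin d)) :
    convexHull ℝ (idealVerts P) = orderPolytope P :=
  le_antisymm (convexHull_min (s8_idealVerts_subset P) (s8_convex_orderPolytope P))
    (s8_orderPolytope_subset_hull P)

end sands8d
section sands8e
variable {d : ℕ}

lemma s8_exists_maximal_above {P : PartialOrder (Fin d)} (S : Finset (Fin d)) :
    ∀ i ∈ S, ∃ a ∈ S, P.le i a ∧ ∀ j ∈ S, ¬ P.lt a j := by
  have key : ∀ i, i ∈ S → ∃ a ∈ S, P.le i a ∧ ∀ j ∈ S, ¬ P.lt a j := by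
    refine s8_upInduction P _ fun i IH hi => ?_
    by_cases h : ∃ j ∈ S, P.lt i j
    · obtain ⟨j, hjS, hj⟩ := h
      obtain ⟨a, haS, hle, hmax⟩ := IH j (s8_mem_ups.2 hj) hjS
      exact ⟨a, haS, P.le_trans _ _ _ (s8_ple_of_plt hj) hle, hmax⟩
    · push_neg at h
      exact ⟨i, hi, P.le_refl _, h⟩
  exact key

lemma s8_sum_rho (A c : Finset (Fin d)) :
    ∑ i ∈ c, rho A i = ((c.filter (fun i => i ∈ A)).card : ℝ) := by
  rw [Finset.card_filter]
  push_cast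
  exact Finset.sum_congr rfl fun i _ => by by_cases h : i ∈ A <;> simp [rho, h]

lemma s8_chain_inter_ac_card {P : PartialOrder (Fin d)} {A c : Finset (Fin d)}
    (hA : IsAC P A) (hc : ∀ i ∈ c, ∀ j ∈ c, P.le i j ∨ P.le j i) :
    (c.filter (fun i => i ∈ A)).card ≤ 1 := by
  rw [Finset.card_le_one]
  intro a ha b hb
  rw [Finset.mem_filter] at ha hb
  by_contra hne
  rcases hc a ha.1 b hb.1 with h | h
  · exact (hA a ha.2 b hb.2 hne).1 h
  · exact (hA a ha.2 b hb.2 hne).2 h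

lemma s8_chainPolytope_subset_hull (P : PartialOrder (Fin d)) :
    chainPolytope P ⊆ convexHull ℝ (acVerts P) := by
  have key : ∀ N (y : Fin d → ℝ), y ∈ chainPolytope P →
      (Finset.univ.filter (fun i => y i ≠ 0)).card ≤ N → y ∈ convexHull ℝ (acVerts P) := by
    intro N
    induction N with
    | zero =>
      intro y hy hcard
      have hsupp : Finset.univ.filter (fun i => y i ≠ 0) = ∅ :=
        Finset.card_eq_zero.1 (Nat.le_zero.1 hcard)
      have hy0 : y = rho (∅ : Finset (Fin d)) := by
        funext i
        have h : i ∉ Finset.univ.filter (fun i => y i ≠ 0) := by simp [hsupp]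
        simp only [Finset.mem_filter, Finset.mem_univ, true_and, not_not] at h
        simp [rho, h]
      rw [hy0]
      exact subset_convexHull ℝ _ ⟨∅, fun i hi => absurd hi (Finset.notMem_empty i), rfl⟩
    | succ N ih =>
      intro y hy hcard
      set I := Finset.univ.filter (fun i => y i ≠ 0) with hIdef
      have hymem : ∀ i, i ∈ I ↔ y i ≠ 0 := by intro i; simp [hIdef]
      have hznotI : ∀ i, i ∉ I → y i = 0 := by
        intro i hi; by_contra h; exact hi ((hymem i).2 h)
      rcases I.eq_empty_or_nonempty with he | hne
      · have hy0 : y = rho (∅ : Finset (Fin d)) := by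
          funext i
          have h : i ∉ I := by simp [he]
          rw [hymem, not_not] at h
          simp [rho, h]
        rw [hy0]
        exact subset_convexHull ℝ _ ⟨∅, fun i hi => absurd hi (Finset.notMem_empty i), rfl⟩
      · have hy0 : ∀ i, 0 ≤ y i := fun i => hy.1 i
        have hsingle : ∀ i, y i ≤ 1 := by
          intro i
          have h := hy.2 {i} (by
            intro a ha b hb
            simp only [Finset.mem_singleton] at ha hb
            subst ha; subst hb; exact Or.inl (P.le_refl _))
          simpa using h
        have hpair : ∀ i a : Fin d, i ≠ a → P.le i a → y i + y a ≤ 1 := by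
          intro i a hne hle
          have hia : i ∉ ({a} : Finset (Fin d)) := by simp [hne]
          have h := hy.2 (insert i {a}) (by
            intro b hb c hc
            simp only [Finset.mem_insert, Finset.mem_singleton] at hb hc
            rcases hb with rfl | rfl <;> rcases hc with rfl | rfl
            · exact Or.inl (P.le_refl _)
            · exact Or.inl hle
            · exact Or.inr hle
            · exact Or.inl (P.le_refl _))
          rw [Finset.sum_insert hia, Finset.sum_singleton] at h
          exact h
        set A := I.filter (fun i => ∀ j ∈ I, ¬ P.lt i j) with hAdef
        have hAsubI : A ⊆ I := Finset.filter_subset _ _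
        have hAac : IsAC P A := by
          intro i hi j hj hij
          rw [hAdef, Finset.mem_filter] at hi hj
          constructor
          · intro h
            exact hi.2 j hj.1 (s8_plt_of_ple_ne h hij)
          · intro h
            exact hj.2 i hi.1 (s8_plt_of_ple_ne h (Ne.symm hij))
        have hexists : ∀ i ∈ I, ∃ a ∈ A, P.le i a := by
          intro i hi
          obtain ⟨a, haI, hle, hmax⟩ := s8_exists_maximal_above I i hi
          exact ⟨a, by rw [hAdef, Finset.mem_filter]; exact ⟨haI, hmax⟩, hle⟩
        have hAne : A.Nonempty := by
          obtain ⟨i, hi⟩ := hne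
          obtain ⟨a, haA, _⟩ := hexists i hi
          exact ⟨a, haA⟩
        obtain ⟨i0, hi0, hlam⟩ := Finset.exists_mem_eq_inf' hAne y
        set lam := A.inf' hAne y with hlamdef
        have hlam_le : ∀ i ∈ A, lam ≤ y i := fun i hi => Finset.inf'_le y hi
        have hlam_pos : 0 < lam := by
          rcases lt_or_eq_of_le (hy0 i0) with h | h
          · rw [hlam]; exact h
          · exact absurd h.symm ((hymem i0).1 (hAsubI hi0))
        have hlam_le1 : lam ≤ 1 := by rw [hlam]; exact hsingle i0
        have hAhull : rho A ∈ convexHull ℝ (acVerts P) :=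
          subset_convexHull ℝ _ ⟨A, hAac, rfl⟩
        rcases eq_or_lt_of_le hlam_le1 with heq | hlt
        · have hIA : I ⊆ A := by
            intro i hi
            obtain ⟨a, haA, hle⟩ := hexists i hi
            by_cases hia : i = a
            · rw [hia]; exact haA
            · have h1 := hpair i a hia hle
              have h2 := hlam_le a haA
              rw [heq] at h2
              have h3 : y i ≤ 0 := by linarith
              exact absurd (le_antisymm h3 (hy0 i)) ((hymem i).1 hi)
          have hyr : y = rho A := by
            funext i
            by_cases hi : i ∈ A
            · have h1 := hlam_le i hi
              rw [heq] at h1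
              have h2 := hsingle i
              simp only [rho, hi, if_true]
              linarith
            · have h : y i = 0 := hznotI i (fun hiI => hi (hIA hiI))
              simp [rho, hi, h]
          rw [hyr]; exact hAhull
        · set y' : Fin d → ℝ := fun i => (1 - lam)⁻¹ * (y i - lam * rho A i) with hy'def
          have h1lam : (0:ℝ) < 1 - lam := by linarith
          have hy'mem : y' ∈ chainPolytope P := by
            constructor
            · intro i
              by_cases hi : i ∈ A
              · have h1 := hlam_le i hi
                simp only [hy'def, rho, hi, if_true, mul_one]
                apply mul_nonneg (by positivity); linarith
              · have h := hy0 i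
                simp only [hy'def, rho, hi, if_false, mul_zero, sub_zero]
                apply mul_nonneg (by positivity); linarith
            · intro c hc
              have hsumy := hy.2 c hc
              have e : ∑ i ∈ c, y' i = (1 - lam)⁻¹ * (∑ i ∈ c, y i - lam * ∑ i ∈ c, rho A i) := by
                simp only [hy'def]
                rw [← Finset.mul_sum, Finset.sum_sub_distrib, ← Finset.mul_sum]
              rw [e, s8_sum_rho]
              have hk := s8_chain_inter_ac_card hAac hc
              have hXb : ∑ i ∈ c, y i
                  - lam * ((c.filter (fun i => i ∈ A)).card : ℝ) ≤ 1 - lam := by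
                rcases Nat.le_one_iff_eq_zero_or_eq_one.1 hk with hk0 | hk1
                · rw [hk0]
                  push_cast
                  rw [Finset.card_eq_zero] at hk0
                  have hcy : ∑ i ∈ c, y i ≤ 1 - lam := by
                    set cs := c.filter (fun i => y i ≠ 0) with hcsdef
                    have hsumcs : ∑ i ∈ cs, y i = ∑ i ∈ c, y i :=
                      Finset.sum_filter_ne_zero c
                    rcases cs.eq_empty_or_nonempty with hcse | hcsne
                    · rw [← hsumcs, hcse]
                      simp
                      linarith
                    · have hcs_sub : cs ⊆ c := Finset.filter_subset _ _
                      have hcs_chain : cs ∈ s8chains P := by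
                        rw [s8_mem_chains]
                        exact fun i hi j hj => hc i (hcs_sub hi) j (hcs_sub hj)
                      obtain ⟨t, htcs, htmax⟩ := s8_chain_max cs hcs_chain hcsne
                      have htI : t ∈ I := by
                        rw [hymem]
                        exact (Finset.mem_filter.1 htcs).2
                      obtain ⟨a, haA, hta⟩ := hexists t htI
                      have hacs : a ∉ cs := by
                        intro hacs
                        have : a ∈ c.filter (fun i => i ∈ A) :=
                          Finset.mem_filter.2 ⟨hcs_sub hacs, haA⟩
                        rw [hk0] at this
                        exact absurd this (Finset.notMem_empty a)
                      have hkey : ∀ w ∈ insert a cs, P.le w a := by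
                        intro w hw
                        rcases Finset.mem_insert.1 hw with h | hw
                        · subst h; exact P.le_refl _
                        · exact P.le_trans _ _ _ (htmax w hw) hta
                      have hbig := hy.2 (insert a cs) (by
                        intro b hb j hj
                        by_cases hba : b = a
                        · subst hba; exact Or.inr (hkey j hj)
                        · by_cases hja : j = a
                          · subst hja; exact Or.inl (hkey b hb)
                          · exact s8_mem_chains.1 hcs_chain
                              b (Finset.mem_of_mem_insert_of_ne hb hba)
                              j (Finset.mem_of_mem_insert_of_ne hj hja))
                      rw [Finset.sum_insert hacs, hsumcs] at hbig
                      have hya := hlam_le a haA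
                      linarith
                  linarith
                · rw [hk1]
                  push_cast
                  linarith
              rw [inv_mul_le_iff₀ h1lam]
              linarith
          have hsub : Finset.univ.filter (fun i => y' i ≠ 0) ⊆ I.erase i0 := by
            intro i hi
            simp only [Finset.mem_filter, Finset.mem_univ, true_and] at hi
            rw [Finset.mem_erase]
            have hiI : i ∈ I := by
              by_contra h
              have hyA : i ∉ A := fun hA' => h (hAsubI hA')
              exact hi (by simp [hy'def, rho, hyA, hznotI i h])
            refine ⟨?_, hiI⟩
            intro h
            subst h
            apply hi
            have hyi0 : y i = lam := by rw [hlam]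
            simp [hy'def, rho, hi0, hyi0]
          have hcard' : (Finset.univ.filter (fun i => y' i ≠ 0)).card ≤ N := by
            have h1 := Finset.card_le_card hsub
            have h2 : (I.erase i0).card = I.card - 1 :=
              Finset.card_erase_of_mem (hAsubI hi0)
            have h3 : I.card ≤ N + 1 := hcard
            have h4 : 0 < I.card := Finset.card_pos.2 hne
            omega
          have hy'hull := ih y' hy'mem hcard'
          have hcomb : y = lam • rho A + (1 - lam) • y' := by
            funext i
            have e : (lam • rho A + (1 - lam) • y') i
                = lam * rho A i + (1 - lam) * ((1 - lam)⁻¹ * (y i - lam * rho A i)) := rfl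
            rw [e, ← mul_assoc, mul_inv_cancel₀ (ne_of_gt h1lam)]
            ring
          rw [hcomb]
          exact (convex_convexHull ℝ (acVerts P)) hAhull hy'hull (le_of_lt hlam_pos)
            (by linarith) (by ring)
  intro y hy
  exact key _ y hy le_rfl

lemma s8_hull_acVerts (P : PartialOrder (Fin d)) :
    convexHull ℝ (acVerts P) = chainPolytope P :=
  le_antisymm (convexHull_min (s8_acVerts_subset P) (s8_convex_chainPolytope P))
    (s8_chainPolytope_subset_hull P)

end sands8e
section sands8f
variable {d : ℕ}

lemma s8_gammaOC_eq (P Q : PartialOrder (Fin d)) :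
    GammaOC P Q = convexJoin ℝ (orderPolytope P) (-(chainPolytope Q)) := by
  unfold GammaOC
  have himg : (fun v : Fin d → ℝ => -v) '' acVerts Q = -(acVerts Q) := Set.image_neg_eq_neg
  rw [himg, convexHull_union (s8_idealVerts_nonempty P) ((s8_acVerts_nonempty Q).neg),
    convexHull_neg, s8_hull_idealVerts, s8_hull_acVerts]

lemma s8_gammaCC_eq (P Q : PartialOrder (Fin d)) :
    GammaCC P Q = convexJoin ℝ (chainPolytope P) (-(chainPolytope Q)) := by
  unfold GammaCC
  have himg : (fun v : Fin d → ℝ => -v) '' acVerts Q = -(acVerts Q) := Set.image_neg_eq_neg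
  rw [himg, convexHull_union (s8_acVerts_nonempty P) ((s8_acVerts_nonempty Q).neg),
    convexHull_neg, s8_hull_acVerts, s8_hull_acVerts]

lemma s8_join_mem {A B : Set (Fin d → ℝ)} {n : ℕ} {x : Fin d → ℝ}
    (hx : x ∈ dil n (convexJoin ℝ A (-B))) :
    ∃ (s t : ℝ) (a b : Fin d → ℝ), 0 ≤ s ∧ 0 ≤ t ∧ s + t = n ∧ a ∈ A ∧ b ∈ B ∧
      ∀ i, x i = s * a i - t * b i := by
  obtain ⟨z, hz, hzx⟩ := hx
  obtain ⟨a, ha, b', hb', u, v, hu, hv, huv, hseg⟩ := mem_convexJoin.1 hz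
  refine ⟨n * u, n * v, a, -b', mul_nonneg (Nat.cast_nonneg n) hu,
    mul_nonneg (Nat.cast_nonneg n) hv, by rw [← mul_add, huv, mul_one], ha,
    Set.mem_neg.1 hb', fun i => ?_⟩
  have e1 : x i = (n : ℝ) * z i := by rw [← hzx]; rfl
  rw [e1, ← hseg]
  have e2 : (u • a + v • b') i = u * a i + v * b' i := rfl
  rw [e2]
  simp only [Pi.neg_apply]
  ring

lemma s8_join_mem_rev {A B : Set (Fin d → ℝ)} {n : ℕ} (hn : 0 < n)
    {x : Fin d → ℝ} {s t : ℝ} {a b : Fin d → ℝ}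
    (hs : 0 ≤ s) (ht : 0 ≤ t) (hst : s + t = n) (ha : a ∈ A) (hb : b ∈ B)
    (hx : ∀ i, x i = s * a i - t * b i) :
    x ∈ dil n (convexJoin ℝ A (-B)) := by
  have hnpos : (0:ℝ) < n := by exact_mod_cast hn
  refine ⟨(s / n) • a + (t / n) • (-b), ?_, ?_⟩
  · refine mem_convexJoin.2 ⟨a, ha, -b, ?_, s / n, t / n, div_nonneg hs hnpos.le,
      div_nonneg ht hnpos.le, ?_, rfl⟩
    · rw [Set.mem_neg, neg_neg]; exact hb
    · field_simp
      linarith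
  · funext i
    show (n:ℝ) * (s / n * a i + t / n * (-(b i))) = x i
    rw [hx i]
    field_simp
    ring

lemma s8_mem_OC {P Q : PartialOrder (Fin d)} {n : ℕ} (hn : 0 < n) {x : Fin d → ℝ} :
    x ∈ dil n (GammaOC P Q) ↔
      s8s P x + s8tmax Q (fun i => s8p P x i - x i) ≤ n := by
  constructor
  · intro hx
    rw [s8_gammaOC_eq] at hx
    obtain ⟨s, t, a, b, hs, ht, hst, ha, hb, hxi⟩ := s8_join_mem hx
    have hple : ∀ i, s8p P x i ≤ s * a i := by
      intro i
      refine s8_fold_le (mul_nonneg hs (ha.1 i).1) fun j hj => ?_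
      rw [s8_mem_upsle] at hj
      have h1 : x j ≤ s * a j := by
        have h2 := mul_nonneg ht (hb.1 j)
        rw [hxi j]; linarith
      calc x j ≤ s * a j := h1
        _ ≤ s * a i := mul_le_mul_of_nonneg_left (ha.2 i j hj) hs
    have hs_le : s8s P x ≤ s := by
      refine s8_s_le hs fun i => ?_
      have h1 : s * a i ≤ s * 1 := mul_le_mul_of_nonneg_left (ha.1 i).2 hs
      rw [mul_one] at h1
      exact le_trans (hple i) h1
    have ht_le : s8tmax Q (fun i => s8p P x i - x i) ≤ t := by
      refine s8_tmax_le ht fun c hc => ?_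
      have hsum : ∑ i ∈ c, (s8p P x i - x i) ≤ ∑ i ∈ c, t * b i := by
        refine Finset.sum_le_sum fun i _ => ?_
        have h1 := hple i
        have h2 := hxi i
        linarith
      rw [← Finset.mul_sum] at hsum
      have hbsum := hb.2 c (s8_mem_chains.1 hc)
      have h3 : t * ∑ i ∈ c, b i ≤ t * 1 := mul_le_mul_of_nonneg_left hbsum ht
      rw [mul_one] at h3
      linarith
    linarith
  · intro hcrit
    rw [s8_gammaOC_eq]
    set s := s8s P x with hsdef
    set t := (n : ℝ) - s with htdef
    have hs0 : 0 ≤ s := s8_s_nonneg P x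
    have htm : s8tmax Q (fun i => s8p P x i - x i) ≤ t := by rw [htdef]; linarith
    have ht0 : 0 ≤ t := le_trans (s8_tmax_nonneg _ _) htm
    have hps : ∀ i, s8p P x i ≤ s := fun i => s8_p_le_s P x i
    have hq0 : ∀ i, 0 ≤ s8p P x i - x i := fun i => by
      have := s8_le_p_self P x i; linarith
    have hqt : ∀ i, s8p P x i - x i ≤ t := fun i =>
      le_trans (s8_single_le_tmax (P := Q) (w := fun i => s8p P x i - x i) i) htm
    set a : Fin d → ℝ := fun i => s8p P x i * s⁻¹ with hadef
    set b : Fin d → ℝ := fun i => (s8p P x i - x i) * t⁻¹ with hbdef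
    have hsa : ∀ i, s * a i = s8p P x i := by
      intro i
      rcases eq_or_lt_of_le hs0 with h0 | hpos
      · have hz : s8p P x i = 0 := le_antisymm (by rw [h0]; exact hps i) (s8_p_nonneg P x i)
        show s * (s8p P x i * s⁻¹) = s8p P x i
        rw [hz]; ring
      · show s * (s8p P x i * s⁻¹) = s8p P x i
        field_simp
    have htb : ∀ i, t * b i = s8p P x i - x i := by
      intro i
      rcases eq_or_lt_of_le ht0 with h0 | hpos
      · have hz : s8p P x i - x i = 0 := le_antisymm (by rw [h0]; exact hqt i) (hq0 i)
        show t * ((s8p P x i - x i) * t⁻¹) = s8p P x i - x i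
        rw [hz]; ring
      · show t * ((s8p P x i - x i) * t⁻¹) = s8p P x i - x i
        field_simp
    have ha : a ∈ orderPolytope P := by
      constructor
      · intro i
        constructor
        · exact mul_nonneg (s8_p_nonneg P x i) (inv_nonneg.2 hs0)
        · rcases eq_or_lt_of_le hs0 with h0 | hpos
          · show s8p P x i * s⁻¹ ≤ 1
            rw [← h0]
            simp
          · have h1 : s8p P x i * s⁻¹ ≤ s * s⁻¹ :=
              mul_le_mul_of_nonneg_right (hps i) (inv_nonneg.2 hs0)
            rw [mul_inv_cancel₀ (ne_of_gt hpos)] at h1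
            exact h1
      · intro i j hij
        exact mul_le_mul_of_nonneg_right (s8_p_antitone x hij) (inv_nonneg.2 hs0)
    have hbmem : b ∈ chainPolytope Q := by
      constructor
      · intro i
        exact mul_nonneg (hq0 i) (inv_nonneg.2 ht0)
      · intro c hc
        have e : ∑ i ∈ c, b i = (∑ i ∈ c, (s8p P x i - x i)) * t⁻¹ := by
          rw [Finset.sum_mul]
        rw [e]
        rcases eq_or_lt_of_le ht0 with h0 | hpos
        · rw [← h0]; simp
        · have h1 : ∑ i ∈ c, (s8p P x i - x i) ≤ t :=
            le_trans (s8_sum_le_tmax (s8_mem_chains.2 hc)) htm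
          have h2 : (∑ i ∈ c, (s8p P x i - x i)) * t⁻¹ ≤ t * t⁻¹ :=
            mul_le_mul_of_nonneg_right h1 (inv_nonneg.2 ht0)
          rw [mul_inv_cancel₀ (ne_of_gt hpos)] at h2
          exact h2
    refine s8_join_mem_rev hn hs0 ht0 (by rw [htdef]; ring) ha hbmem fun i => ?_
    rw [hsa i, htb i]
    ring

lemma s8_mem_CC {P Q : PartialOrder (Fin d)} {n : ℕ} (hn : 0 < n) {x : Fin d → ℝ} :
    x ∈ dil n (GammaCC P Q) ↔ s8tmax P (s8pos x) + s8tmax Q (s8neg x) ≤ n := by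
  constructor
  · intro hx
    rw [s8_gammaCC_eq] at hx
    obtain ⟨s, t, a, b, hs, ht, hst, ha, hb, hxi⟩ := s8_join_mem hx
    have hple : ∀ i, s8pos x i ≤ s * a i := by
      intro i
      have h1 : x i ≤ s * a i := by
        have h2 := mul_nonneg ht (hb.1 i)
        rw [hxi i]; linarith
      have h3 : (0:ℝ) ≤ s * a i := mul_nonneg hs (ha.1 i)
      exact max_le h1 h3
    have hnle : ∀ i, s8neg x i ≤ t * b i := by
      intro i
      have h1 : -x i ≤ t * b i := by
        have h2 := mul_nonneg hs (ha.1 i)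
        rw [hxi i]; linarith
      have h3 : (0:ℝ) ≤ t * b i := mul_nonneg ht (hb.1 i)
      exact max_le h1 h3
    have hs_le : s8tmax P (s8pos x) ≤ s := by
      refine s8_tmax_le hs fun c hc => ?_
      have hsum : ∑ i ∈ c, s8pos x i ≤ ∑ i ∈ c, s * a i :=
        Finset.sum_le_sum fun i _ => hple i
      rw [← Finset.mul_sum] at hsum
      have hasum := ha.2 c (s8_mem_chains.1 hc)
      have h3 : s * ∑ i ∈ c, a i ≤ s * 1 := mul_le_mul_of_nonneg_left hasum hs
      rw [mul_one] at h3
      linarith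
    have ht_le : s8tmax Q (s8neg x) ≤ t := by
      refine s8_tmax_le ht fun c hc => ?_
      have hsum : ∑ i ∈ c, s8neg x i ≤ ∑ i ∈ c, t * b i :=
        Finset.sum_le_sum fun i _ => hnle i
      rw [← Finset.mul_sum] at hsum
      have hbsum := hb.2 c (s8_mem_chains.1 hc)
      have h3 : t * ∑ i ∈ c, b i ≤ t * 1 := mul_le_mul_of_nonneg_left hbsum ht
      rw [mul_one] at h3
      linarith
    linarith
  · intro hcrit
    rw [s8_gammaCC_eq]
    set s := s8tmax P (s8pos x) with hsdef
    set t := (n : ℝ) - s with htdef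
    have hs0 : 0 ≤ s := s8_tmax_nonneg _ _
    have htm : s8tmax Q (s8neg x) ≤ t := by rw [htdef]; linarith
    have ht0 : 0 ≤ t := le_trans (s8_tmax_nonneg _ _) htm
    have hps : ∀ i, s8pos x i ≤ s := fun i => s8_single_le_tmax (P := P) i
    have hq0 : ∀ i, 0 ≤ s8neg x i := fun i => le_max_right _ _
    have hp0 : ∀ i, 0 ≤ s8pos x i := fun i => le_max_right _ _
    have hqt : ∀ i, s8neg x i ≤ t := fun i => le_trans (s8_single_le_tmax (P := Q) i) htm
    set a : Fin d → ℝ := fun i => s8pos x i * s⁻¹ with hadef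
    set b : Fin d → ℝ := fun i => s8neg x i * t⁻¹ with hbdef
    have hsa : ∀ i, s * a i = s8pos x i := by
      intro i
      rcases eq_or_lt_of_le hs0 with h0 | hpos
      · have hz : s8pos x i = 0 := le_antisymm (by rw [h0]; exact hps i) (hp0 i)
        show s * (s8pos x i * s⁻¹) = s8pos x i
        rw [hz]; ring
      · show s * (s8pos x i * s⁻¹) = s8pos x i
        field_simp
    have htb : ∀ i, t * b i = s8neg x i := by
      intro i
      rcases eq_or_lt_of_le ht0 with h0 | hpos
      · have hz : s8neg x i = 0 := le_antisymm (by rw [h0]; exact hqt i) (hq0 i)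
        show t * (s8neg x i * t⁻¹) = s8neg x i
        rw [hz]; ring
      · show t * (s8neg x i * t⁻¹) = s8neg x i
        field_simp
    have ha : a ∈ chainPolytope P := by
      constructor
      · intro i
        exact mul_nonneg (hp0 i) (inv_nonneg.2 hs0)
      · intro c hc
        have e : ∑ i ∈ c, a i = (∑ i ∈ c, s8pos x i) * s⁻¹ := by rw [Finset.sum_mul]
        rw [e]
        rcases eq_or_lt_of_le hs0 with h0 | hpos
        · rw [← h0]; simp
        · have h1 : ∑ i ∈ c, s8pos x i ≤ s := s8_sum_le_tmax (s8_mem_chains.2 hc)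
          have h2 : (∑ i ∈ c, s8pos x i) * s⁻¹ ≤ s * s⁻¹ :=
            mul_le_mul_of_nonneg_right h1 (inv_nonneg.2 hs0)
          rw [mul_inv_cancel₀ (ne_of_gt hpos)] at h2
          exact h2
    have hbmem : b ∈ chainPolytope Q := by
      constructor
      · intro i
        exact mul_nonneg (hq0 i) (inv_nonneg.2 ht0)
      · intro c hc
        have e : ∑ i ∈ c, b i = (∑ i ∈ c, s8neg x i) * t⁻¹ := by rw [Finset.sum_mul]
        rw [e]
        rcases eq_or_lt_of_le ht0 with h0 | hpos
        · rw [← h0]; simp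
        · have h1 : ∑ i ∈ c, s8neg x i ≤ t :=
            le_trans (s8_sum_le_tmax (s8_mem_chains.2 hc)) htm
          have h2 : (∑ i ∈ c, s8neg x i) * t⁻¹ ≤ t * t⁻¹ :=
            mul_le_mul_of_nonneg_right h1 (inv_nonneg.2 ht0)
          rw [mul_inv_cancel₀ (ne_of_gt hpos)] at h2
          exact h2
    refine s8_join_mem_rev hn hs0 ht0 (by rw [htdef]; ring) ha hbmem fun i => ?_
    rw [hsa i, htb i]
    show x i = max (x i) 0 - max (-x i) 0
    rcases le_total (x i) 0 with h | h
    · rw [max_eq_right h, max_eq_left (by linarith)]; ring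
    · rw [max_eq_left h, max_eq_right (by linarith)]; ring

end sands8f
theorem statement8 {d : ℕ} (P Q : PartialOrder (Fin d)) :
    ∀ n : ℕ, 0 < n →
      latCount (dil n (GammaOC P Q)) = latCount (dil n (GammaCC P Q)) := by
  intro n hn
  have hcriteq : ∀ x : Fin d → ℝ,
      (x ∈ dil n (GammaOC P Q) ↔ s8T P x ∈ dil n (GammaCC P Q)) := by
    intro x
    rw [s8_mem_OC hn, s8_mem_CC hn]
    have h1 : s8tmax P (s8pos (s8T P x)) = s8s P x := (s8_s_eq_tmax P x).symm
    have h2 : s8tmax Q (s8neg (s8T P x)) = s8tmax Q (fun i => s8p P x i - x i) := by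
      rw [s8_q_eq_neg_T P x]
    rw [h1, h2]
  have himg : s8T P '' {x ∈ dil n (GammaOC P Q) | IsLatticePt x}
      = {x ∈ dil n (GammaCC P Q) | IsLatticePt x} := by
    ext y
    constructor
    · rintro ⟨x, ⟨hx, hlx⟩, rfl⟩
      exact ⟨(hcriteq x).1 hx, s8_T_lattice hlx⟩
    · rintro ⟨hy, hly⟩
      refine ⟨s8X P y, ⟨?_, s8_X_lattice hly⟩, s8_T_X P y⟩
      have h := hcriteq (s8X P y)
      rw [s8_T_X P y] at h
      exact h.2 hy
  unfold latCount
  rw [← himg, Set.ncard_image_of_injective _ (s8_T_injective P)]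
end

section
/- Let P and Q be posets with |P| = |Q| = d ≥ 2. If Γ(C(P), −C(Q)) is simplicial, then P has no antichain of size ≥ 3 (i.e., every set of 3 pairwise incomparable elements of P is empty; equivalently A_k(P) = ∅ for k ≥ 3), and likewise for Q. -/
open Set MeasureTheory Pointwise

section AuxProof

lemma rho_inj {d : ℕ} : Function.Injective (rho (d := d)) := by
  intro S S' h
  ext i
  have := congrFun h i
  simp only [rho] at this
  split_ifs at this with h1 h2 h2 <;> simp_all

lemma isAC_subset {d : ℕ} {P : PartialOrder (Fin d)} {A B : Finset (Fin d)}
    (h : IsAC P A) (hBA : B ⊆ A) : IsAC P B :=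
  fun i hi j hj => h i (hBA hi) j (hBA hj)

noncomputable def mFun {d : ℕ} (S : Finset (Fin d)) : (Fin d → ℝ) →L[ℝ] ℝ :=
  ∑ i, (if i ∈ S then ((d : ℝ) + 1) else -1) • ContinuousLinearMap.proj i

lemma mFun_apply {d : ℕ} (S : Finset (Fin d)) (x : Fin d → ℝ) :
    mFun S x = ∑ i, (if i ∈ S then ((d : ℝ) + 1) else -1) * x i := by
  simp only [mFun, ContinuousLinearMap.sum_apply]
  apply Finset.sum_congr rfl
  intro i _
  by_cases hi : i ∈ S <;>
    simp [hi, ContinuousLinearMap.smul_apply, ContinuousLinearMap.proj_apply, smul_eq_mul,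
      neg_one_mul]

lemma mFun_rho {d : ℕ} (S S' : Finset (Fin d)) :
    mFun S (rho S') = ((d : ℝ) + 1) * (S' ∩ S).card - ((S' \ S).card : ℝ) := by
  rw [mFun_apply]
  have h1 : ∑ i, (if i ∈ S then ((d : ℝ) + 1) else -1) * rho S' i
      = ∑ i ∈ S', (if i ∈ S then ((d : ℝ) + 1) else -1) := by
    trans ∑ i, (if i ∈ S' then (if i ∈ S then ((d : ℝ) + 1) else -1) else 0)
    · apply Finset.sum_congr rfl
      intro i _
      by_cases hi : i ∈ S' <;> simp [rho, hi]
    · rw [Finset.sum_ite_mem, Finset.univ_inter]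
  rw [h1, ← Finset.sum_filter_add_sum_filter_not S' (· ∈ S)]
  have h2 : S'.filter (· ∈ S) = S' ∩ S := by ext i; simp [Finset.mem_filter]
  have h3 : S'.filter (fun i => ¬ i ∈ S) = S' \ S := by ext i; simp [Finset.mem_filter]
  rw [h2, h3, Finset.sum_congr rfl (fun i hi => if_pos (Finset.mem_inter.1 hi).2),
    Finset.sum_congr rfl (fun i hi => if_neg (Finset.mem_sdiff.1 hi).2),
    Finset.sum_const, Finset.sum_const]
  push_cast
  ring

lemma mlt1 {d : ℕ} (S S' : Finset (Fin d)) (h : S' ≠ S) :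
    mFun S (rho S') < mFun S (rho S) := by
  rw [mFun_rho, mFun_rho, Finset.inter_self, Finset.sdiff_self, Finset.card_empty]
  have hd : (0 : ℝ) < (d : ℝ) + 1 := by positivity
  by_cases hsub : S ⊆ S'
  · have h1 : S' ∩ S = S := Finset.inter_eq_right.mpr hsub
    have h2 : (S' \ S).Nonempty :=
      Finset.sdiff_nonempty.mpr (fun hc => h (Finset.Subset.antisymm hc hsub))
    have h3 : (1 : ℝ) ≤ ((S' \ S).card : ℝ) := by
      exact_mod_cast Finset.card_pos.mpr h2
    rw [h1]
    push_cast
    linarith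
  · have h1 : S' ∩ S ⊂ S := by
      constructor
      · exact Finset.inter_subset_right
      · intro hc
        exact hsub (fun x hx => (Finset.mem_inter.1 (hc hx)).1)
    have h2 : ((S' ∩ S).card : ℝ) + 1 ≤ (S.card : ℝ) := by
      exact_mod_cast Finset.card_lt_card h1
    have h3 : (0 : ℝ) ≤ ((S' \ S).card : ℝ) := by positivity
    have h4 := mul_le_mul_of_nonneg_left h2 hd.le
    push_cast
    nlinarith

lemma mlt2 {d : ℕ} (S T : Finset (Fin d)) (hS : S.Nonempty) :
    mFun S (-(rho T)) < mFun S (rho S) := by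
  rw [map_neg, mFun_rho, mFun_rho, Finset.inter_self, Finset.sdiff_self, Finset.card_empty]
  have h1 : ((T \ S).card : ℝ) ≤ (d : ℝ) := by
    exact_mod_cast (Finset.card_le_univ _).trans_eq (by simp)
  have h2 : (1 : ℝ) ≤ (S.card : ℝ) := by exact_mod_cast Finset.card_pos.mpr hS
  have h3 : (0 : ℝ) ≤ ((T ∩ S).card : ℝ) := by positivity
  have hd : (0 : ℝ) < (d : ℝ) + 1 := by positivity
  push_cast
  nlinarith

lemma hull_le_halfspace {d : ℕ} (G : Set (Fin d → ℝ)) (m : (Fin d → ℝ) →L[ℝ] ℝ) (c : ℝ)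
    (hm : ∀ g ∈ G, m g ≤ c) : convexHull ℝ G ⊆ {x | m x ≤ c} :=
  convexHull_min hm (convex_halfSpace_le ⟨m.map_add, m.map_smul⟩ c)

lemma extreme_of_strict {d : ℕ} (G : Finset (Fin d → ℝ)) (p : Fin d → ℝ) (hp : p ∈ G)
    (m : (Fin d → ℝ) →L[ℝ] ℝ) (hm : ∀ g ∈ G, g ≠ p → m g < m p) :
    p ∈ (convexHull ℝ (G : Set (Fin d → ℝ))).extremePoints ℝ := by
  have hub : ∀ x ∈ convexHull ℝ (G : Set (Fin d → ℝ)), m x ≤ m p := by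
    intro x hx
    refine hull_le_halfspace _ m (m p) ?_ hx
    intro g hg
    by_cases hgp : g = p
    · simp [hgp]
    · exact (hm g hg hgp).le
  have huniq : ∀ x ∈ convexHull ℝ (G : Set (Fin d → ℝ)), m x = m p → x = p := by
    intro x hx hmx
    rw [Finset.convexHull_eq] at hx
    obtain ⟨w, hw0, hw1, hcm⟩ := hx
    rw [Finset.centerMass_eq_of_sum_1 _ _ hw1] at hcm
    simp only [id] at hcm
    have hmx' : ∑ y ∈ G, w y * m y = m p := by
      rw [← hmx, ← hcm, map_sum]
      apply Finset.sum_congr rfl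
      intro y _
      rw [m.map_smul, smul_eq_mul]
    have hz : ∑ y ∈ G, w y * (m p - m y) = 0 := by
      rw [Finset.sum_congr rfl (fun y _ => mul_sub (w y) (m p) (m y)),
        Finset.sum_sub_distrib, ← Finset.sum_mul, hw1, hmx']
      ring
    have hall := (Finset.sum_eq_zero_iff_of_nonneg (fun y hy => ?_)).1 hz
    · have hwz : ∀ y ∈ G, y ≠ p → w y = 0 := by
        intro y hy hyp
        have := hall y hy
        have hlt : 0 < m p - m y := sub_pos.2 (hm y hy hyp)
        rcases mul_eq_zero.1 this with h' | h'
        · exact h'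
        · exact absurd h' (ne_of_gt hlt)
      have hwp : w p = 1 := by
        rw [← hw1, Finset.sum_eq_single p (fun y hy hyp => hwz y hy hyp) (fun h => absurd hp h)]
      rw [← hcm, Finset.sum_eq_single p (fun y hy hyp => by rw [hwz y hy hyp, zero_smul])
        (fun h => absurd hp h), hwp, one_smul]
    · exact mul_nonneg (hw0 y hy) (sub_nonneg.2 (by
        by_cases hyp : y = p
        · simp [hyp]
        · exact (hm y hy hyp).le))
  refine ⟨subset_convexHull ℝ _ hp, ?_⟩
  intro x1 hx1 x2 hx2 hseg
  obtain ⟨a, b, ha, hb, hab, hsum⟩ := hseg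
  have e1 := hub x1 hx1
  have e2 := hub x2 hx2
  have hmp : a * m x1 + b * m x2 = m p := by
    rw [← hsum]; simp [map_add, m.map_smul, smul_eq_mul]
  have hmm : a * m p + b * m p = m p := by rw [← add_mul, hab, one_mul]
  have h1 : m x1 = m p := by
    by_contra hne
    have hlt := lt_of_le_of_ne e1 hne
    have := mul_lt_mul_of_pos_left hlt ha
    have := mul_le_mul_of_nonneg_left e2 hb.le
    linarith
  have h2 : m x2 = m p := by
    by_contra hne
    have hlt := lt_of_le_of_ne e2 hne
    have := mul_lt_mul_of_pos_left hlt hb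
    have := mul_le_mul_of_nonneg_left e1 ha.le
    linarith
  exact huniq x1 hx1 h1

lemma core {d : ℕ} (G : Finset (Fin d → ℝ))
    (h : IsSimplicialPolytope (convexHull ℝ (G : Set (Fin d → ℝ))))
    (p : Fin 4 → (Fin d → ℝ)) (hpG : ∀ i, p i ∈ G) (hinj : Function.Injective p)
    (hdep : p 0 + p 3 = p 1 + p 2)
    (l : (Fin d → ℝ) →L[ℝ] ℝ) (hl : ∀ g ∈ G, l g ≤ 1) (hlp : ∀ i, l (p i) = 1)
    (g0 : Fin d → ℝ) (hg0 : g0 ∈ G) (hg0l : l g0 < 1)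
    (hm : ∀ i, ∃ m : (Fin d → ℝ) →L[ℝ] ℝ, ∀ g ∈ G, g ≠ p i → m g < m (p i)) : False := by
  set S := convexHull ℝ (G : Set (Fin d → ℝ)) with hS
  set F : Set (Fin d → ℝ) := {x ∈ S | ∀ y ∈ S, l y ≤ l x} with hF
  have hFS : F ⊆ S := fun x hx => hx.1
  have hexp : IsExposed ℝ S F := fun _ => ⟨l, rfl⟩
  have hub : ∀ y ∈ S, l y ≤ 1 := fun y hy => hull_le_halfspace _ l 1 hl hy
  have hpF : ∀ i, p i ∈ F := by
    intro i
    exact ⟨subset_convexHull ℝ _ (hpG i), fun y hy => (hub y hy).trans_eq (hlp i).symm⟩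
  have hFne : F ≠ S := by
    intro hc
    have hg0S : g0 ∈ S := subset_convexHull ℝ _ hg0
    have : g0 ∈ F := hc ▸ hg0S
    have := this.2 (p 0) (subset_convexHull ℝ _ (hpG 0))
    rw [hlp 0] at this
    linarith
  obtain ⟨V, hVf, hVai, hFV⟩ := h F hexp hFne
  have hpV : ∀ i, p i ∈ V := by
    intro i
    obtain ⟨m, hm'⟩ := hm i
    have hext : p i ∈ S.extremePoints ℝ := extreme_of_strict G (p i) (hpG i) m hm'
    have hextF : p i ∈ F.extremePoints ℝ := by
      refine ⟨hpF i, ?_⟩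
      intro x1 h1 x2 h2 hs
      exact hext.2 (hFS h1) (hFS h2) hs
    rw [hFV] at hextF
    exact extremePoints_convexHull_subset hextF
  have hfinj : Function.Injective (fun i : Fin 4 => (⟨p i, hpV i⟩ : V)) := by
    intro i j hij
    exact hinj (congrArg Subtype.val hij)
  have hAI : AffineIndependent ℝ p := by
    have := hVai.comp_embedding ⟨fun i : Fin 4 => (⟨p i, hpV i⟩ : V), hfinj⟩
    exact this
  have := affineIndependent_iff.1 hAI Finset.univ ![1, -1, -1, 1]
    (by simp only [Fin.sum_univ_four]; change (1:ℝ) + -1 + -1 + 1 = 0; norm_num) ?_ 0 (Finset.mem_univ 0)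
  · norm_num at this
  · rw [Fin.sum_univ_four]
    simp only [Matrix.cons_val_zero, Matrix.cons_val_one, Matrix.head_cons,
      Matrix.cons_val_two, Matrix.tail_cons, Matrix.cons_val_three, one_smul, neg_smul]
    have : p 0 + p 3 - (p 1 + p 2) = 0 := by rw [hdep]; ring
    linear_combination this

lemma inj4 {β : Type*} {x1 x2 x3 x4 : β} (d12 : x1 ≠ x2) (d13 : x1 ≠ x3) (d14 : x1 ≠ x4)
    (d23 : x2 ≠ x3) (d24 : x2 ≠ x4) (d34 : x3 ≠ x4) :
    Function.Injective ![x1, x2, x3, x4] := by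
  intro i j hij
  fin_cases i <;> fin_cases j <;> simp_all

lemma three_elts {α : Type*} [DecidableEq α] {A : Finset α} (h : 3 ≤ A.card) :
    ∃ a b c, a ∈ A ∧ b ∈ A ∧ c ∈ A ∧ a ≠ b ∧ a ≠ c ∧ b ≠ c := by
  obtain ⟨a, ha⟩ := Finset.card_pos.1 (show 0 < A.card by omega)
  have h2 : 0 < (A.erase a).card := by rw [Finset.card_erase_of_mem ha]; omega
  obtain ⟨b, hb⟩ := Finset.card_pos.1 h2
  have h3 : 0 < ((A.erase a).erase b).card := by
    rw [Finset.card_erase_of_mem hb, Finset.card_erase_of_mem ha]; omega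
  obtain ⟨c, hcc⟩ := Finset.card_pos.1 h3
  have hba : b ≠ a := (Finset.mem_erase.1 hb).1
  have hcb : c ≠ b := (Finset.mem_erase.1 hcc).1
  have hca : c ≠ a := (Finset.mem_erase.1 (Finset.mem_of_mem_erase hcc)).1
  exact ⟨a, b, c, ha, Finset.mem_of_mem_erase hb,
    Finset.mem_of_mem_erase (Finset.mem_of_mem_erase hcc), hba.symm, hca.symm, hcb.symm⟩

lemma gens_finite {d : ℕ} (P Q : PartialOrder (Fin d)) :
    (acVerts P ∪ (fun v => -v) '' acVerts Q).Finite := by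
  apply Set.Finite.union
  · exact (Set.finite_range (rho (d := d))).subset (by rintro x ⟨A, _, rfl⟩; exact ⟨A, rfl⟩)
  · exact Set.Finite.image _
      ((Set.finite_range (rho (d := d))).subset (by rintro x ⟨A, _, rfl⟩; exact ⟨A, rfl⟩))

lemma noBigAC {d : ℕ} (P Q : PartialOrder (Fin d))
    (h : IsSimplicialPolytope (GammaCC P Q)) :
    (∀ A : Finset (Fin d), IsAC P A → A.card ≤ 2) ∧
    (∀ B : Finset (Fin d), IsAC Q B → B.card ≤ 2) := by
  have hfin := gens_finite P Q
  set G : Finset (Fin d → ℝ) := hfin.toFinset with hG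
  have hGamma : GammaCC P Q = convexHull ℝ (G : Set (Fin d → ℝ)) := by
    rw [GammaCC, hG, hfin.coe_toFinset]
  rw [hGamma] at h
  have hmemP : ∀ S : Finset (Fin d), IsAC P S → rho S ∈ G := by
    intro S hS
    rw [hG, hfin.mem_toFinset]
    exact Or.inl ⟨S, hS, rfl⟩
  have hmemQ : ∀ T : Finset (Fin d), IsAC Q T → -(rho T) ∈ G := by
    intro T hT
    rw [hG, hfin.mem_toFinset]
    exact Or.inr ⟨rho T, ⟨T, hT, rfl⟩, rfl⟩
  have hempty : ∀ (R : PartialOrder (Fin d)), IsAC R (∅ : Finset (Fin d)) :=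
    fun R i hi => absurd hi (Finset.notMem_empty i)
  have hGcases : ∀ g ∈ G, (∃ S, IsAC P S ∧ g = rho S) ∨ (∃ T, IsAC Q T ∧ g = -(rho T)) := by
    intro g hg
    rw [hG, hfin.mem_toFinset] at hg
    rcases hg with ⟨S, hS, rfl⟩ | ⟨v, ⟨T, hT, rfl⟩, rfl⟩
    · exact Or.inl ⟨S, hS, rfl⟩
    · exact Or.inr ⟨T, hT, rfl⟩
  constructor
  · -- P side
    intro A hA
    by_contra hcard
    obtain ⟨a, b, c, ha, hb, hcc, hab, hac, hbc⟩ := three_elts (A := A) (by omega)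
    set S1 : Finset (Fin d) := {a} with hS1
    set S2 : Finset (Fin d) := {a, b} with hS2
    set S3 : Finset (Fin d) := {a, c} with hS3
    set S4 : Finset (Fin d) := {a, b, c} with hS4
    have hsub1 : S1 ⊆ A := by simp [hS1, Finset.singleton_subset_iff, ha]
    have hsub2 : S2 ⊆ A := by simp [hS2, Finset.insert_subset_iff, ha, hb]
    have hsub3 : S3 ⊆ A := by simp [hS3, Finset.insert_subset_iff, ha, hcc]
    have hsub4 : S4 ⊆ A := by simp [hS4, Finset.insert_subset_iff, ha, hb, hcc]
    have hAC1 := isAC_subset hA hsub1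
    have hAC2 := isAC_subset hA hsub2
    have hAC3 := isAC_subset hA hsub3
    have hAC4 := isAC_subset hA hsub4
    have haS : ∀ k : Fin 4, a ∈ (![S1, S2, S3, S4] k) := by
      intro k
      fin_cases k <;> simp [hS1, hS2, hS3, hS4]
    have d12 : S1 ≠ S2 := by
      intro he
      have : b ∈ S1 := he ▸ (by simp [hS2] : b ∈ S2)
      simp [hS1] at this
      exact hab this.symm
    have d13 : S1 ≠ S3 := by
      intro he
      have : c ∈ S1 := he ▸ (by simp [hS3] : c ∈ S3)
      simp [hS1] at this
      exact hac this.symm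
    have d14 : S1 ≠ S4 := by
      intro he
      have : b ∈ S1 := he ▸ (by simp [hS4] : b ∈ S4)
      simp [hS1] at this
      exact hab this.symm
    have d23 : S2 ≠ S3 := by
      intro he
      have : b ∈ S3 := he ▸ (by simp [hS2] : b ∈ S2)
      simp [hS3] at this
      rcases this with h' | h'
      · exact hab h'.symm
      · exact hbc h'
    have d24 : S2 ≠ S4 := by
      intro he
      have : c ∈ S2 := he ▸ (by simp [hS4] : c ∈ S4)
      simp [hS2] at this
      rcases this with h' | h'
      · exact hac h'.symm
      · exact hbc h'.symm
    have d34 : S3 ≠ S4 := by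
      intro he
      have : b ∈ S3 := he ▸ (by simp [hS4] : b ∈ S4)
      simp [hS3] at this
      rcases this with h' | h'
      · exact hab h'.symm
      · exact hbc h'
    set p : Fin 4 → (Fin d → ℝ) := fun k => rho (![S1, S2, S3, S4] k) with hp
    refine core G h p ?_ ?_ ?_ (ContinuousLinearMap.proj a) ?_ ?_ (rho ∅) (hmemP ∅ (hempty P))
      ?_ ?_
    · intro k
      fin_cases k <;>
        simp only [hp, Matrix.cons_val_zero, Matrix.cons_val_one, Matrix.head_cons,
          Matrix.cons_val_two, Matrix.tail_cons, Matrix.cons_val_three] <;>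
        [exact hmemP S1 hAC1; exact hmemP S2 hAC2; exact hmemP S3 hAC3; exact hmemP S4 hAC4]
    · exact Function.Injective.comp rho_inj (inj4 d12 d13 d14 d23 d24 d34)
    · show rho S1 + rho S4 = rho S2 + rho S3
      funext i
      simp only [Pi.add_apply, rho]
      by_cases h1 : i = a <;> by_cases h2 : i = b <;> by_cases h3 : i = c <;>
        first
        | exact absurd (h2.symm.trans h3) hbc
        | simp [hS1, hS2, hS3, hS4, h1, h2, h3, hab, hac, hbc, Ne.symm hab, Ne.symm hac, Ne.symm hbc]
    · intro g hg
      rcases hGcases g hg with ⟨S, _, rfl⟩ | ⟨T, _, rfl⟩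
      · simp only [ContinuousLinearMap.proj_apply, rho]
        split <;> norm_num
      · simp only [ContinuousLinearMap.proj_apply, Pi.neg_apply, rho]
        split <;> norm_num
    · intro k
      simp only [hp, ContinuousLinearMap.proj_apply, rho, if_pos (haS k)]
    · simp [ContinuousLinearMap.proj_apply, rho]
    · intro k
      refine ⟨mFun (![S1, S2, S3, S4] k), ?_⟩
      intro g hg hne
      have hne' : ∀ S', g = rho S' → S' ≠ ![S1, S2, S3, S4] k := by
        rintro S' rfl he
        exact hne (by rw [hp, he])
      have hkne : (![S1, S2, S3, S4] k).Nonempty := ⟨a, haS k⟩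
      rcases hGcases g hg with ⟨S', _, rfl⟩ | ⟨T, _, rfl⟩
      · exact mlt1 _ _ (hne' S' rfl) |>.trans_eq (by rw [hp])
      · exact mlt2 _ T hkne |>.trans_eq (by rw [hp])
  · -- Q side
    intro B hB
    by_contra hcard
    obtain ⟨a, b, c, ha, hb, hcc, hab, hac, hbc⟩ := three_elts (A := B) (by omega)
    set S1 : Finset (Fin d) := {a} with hS1
    set S2 : Finset (Fin d) := {a, b} with hS2
    set S3 : Finset (Fin d) := {a, c} with hS3
    set S4 : Finset (Fin d) := {a, b, c} with hS4
    have hsub1 : S1 ⊆ B := by simp [hS1, Finset.singleton_subset_iff, ha]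
    have hsub2 : S2 ⊆ B := by simp [hS2, Finset.insert_subset_iff, ha, hb]
    have hsub3 : S3 ⊆ B := by simp [hS3, Finset.insert_subset_iff, ha, hcc]
    have hsub4 : S4 ⊆ B := by simp [hS4, Finset.insert_subset_iff, ha, hb, hcc]
    have hAC1 := isAC_subset hB hsub1
    have hAC2 := isAC_subset hB hsub2
    have hAC3 := isAC_subset hB hsub3
    have hAC4 := isAC_subset hB hsub4
    have haS : ∀ k : Fin 4, a ∈ (![S1, S2, S3, S4] k) := by
      intro k
      fin_cases k <;> simp [hS1, hS2, hS3, hS4]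
    have d12 : S1 ≠ S2 := by
      intro he
      have : b ∈ S1 := he ▸ (by simp [hS2] : b ∈ S2)
      simp [hS1] at this
      exact hab this.symm
    have d13 : S1 ≠ S3 := by
      intro he
      have : c ∈ S1 := he ▸ (by simp [hS3] : c ∈ S3)
      simp [hS1] at this
      exact hac this.symm
    have d14 : S1 ≠ S4 := by
      intro he
      have : b ∈ S1 := he ▸ (by simp [hS4] : b ∈ S4)
      simp [hS1] at this
      exact hab this.symm
    have d23 : S2 ≠ S3 := by
      intro he
      have : b ∈ S3 := he ▸ (by simp [hS2] : b ∈ S2)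
      simp [hS3] at this
      rcases this with h' | h'
      · exact hab h'.symm
      · exact hbc h'
    have d24 : S2 ≠ S4 := by
      intro he
      have : c ∈ S2 := he ▸ (by simp [hS4] : c ∈ S4)
      simp [hS2] at this
      rcases this with h' | h'
      · exact hac h'.symm
      · exact hbc h'.symm
    have d34 : S3 ≠ S4 := by
      intro he
      have : b ∈ S3 := he ▸ (by simp [hS4] : b ∈ S4)
      simp [hS3] at this
      rcases this with h' | h'
      · exact hab h'.symm
      · exact hbc h'
    set p : Fin 4 → (Fin d → ℝ) := fun k => -(rho (![S1, S2, S3, S4] k)) with hp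
    refine core G h p ?_ ?_ ?_ (-(ContinuousLinearMap.proj a)) ?_ ?_ (rho ∅)
      (hmemP ∅ (hempty P)) ?_ ?_
    · intro k
      fin_cases k <;>
        simp only [hp, Matrix.cons_val_zero, Matrix.cons_val_one, Matrix.head_cons,
          Matrix.cons_val_two, Matrix.tail_cons, Matrix.cons_val_three] <;>
        [exact hmemQ S1 hAC1; exact hmemQ S2 hAC2; exact hmemQ S3 hAC3; exact hmemQ S4 hAC4]
    · exact Function.Injective.comp neg_injective
        (Function.Injective.comp rho_inj (inj4 d12 d13 d14 d23 d24 d34))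
    · show -(rho S1) + -(rho S4) = -(rho S2) + -(rho S3)
      have hdep : rho S1 + rho S4 = rho S2 + rho S3 := by
        funext i
        simp only [Pi.add_apply, rho]
        by_cases h1 : i = a <;> by_cases h2 : i = b <;> by_cases h3 : i = c <;>
          first
          | exact absurd (h2.symm.trans h3) hbc
          | simp [hS1, hS2, hS3, hS4, h1, h2, h3, hab, hac, hbc, Ne.symm hab, Ne.symm hac, Ne.symm hbc]
      rw [← neg_add, ← neg_add, hdep]
    · intro g hg
      rcases hGcases g hg with ⟨S, _, rfl⟩ | ⟨T, _, rfl⟩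
      · simp only [ContinuousLinearMap.neg_apply, ContinuousLinearMap.proj_apply, rho]
        split <;> norm_num
      · simp only [ContinuousLinearMap.neg_apply, ContinuousLinearMap.proj_apply,
          Pi.neg_apply, rho]
        split <;> norm_num
    · intro k
      simp only [hp, ContinuousLinearMap.neg_apply, ContinuousLinearMap.proj_apply,
        Pi.neg_apply, rho, if_pos (haS k), neg_neg]
    · simp [ContinuousLinearMap.neg_apply, ContinuousLinearMap.proj_apply, rho]
    · intro k
      refine ⟨-(mFun (![S1, S2, S3, S4] k)), ?_⟩
      intro g hg hne
      have hkne : (![S1, S2, S3, S4] k).Nonempty := ⟨a, haS k⟩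
      have hval : (-(mFun (![S1, S2, S3, S4] k))) (p k)
          = mFun (![S1, S2, S3, S4] k) (rho (![S1, S2, S3, S4] k)) := by
        rw [hp]
        simp [map_neg]
      rcases hGcases g hg with ⟨S', _, rfl⟩ | ⟨T, _, rfl⟩
      · rw [hval]
        have : (-(mFun (![S1, S2, S3, S4] k))) (rho S')
            = mFun (![S1, S2, S3, S4] k) (-(rho S')) := by simp [map_neg]
        rw [this]
        exact mlt2 _ S' hkne
      · rw [hval]
        have hTne : T ≠ ![S1, S2, S3, S4] k := by
          intro he
          exact hne (by rw [hp, he])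
        have : (-(mFun (![S1, S2, S3, S4] k))) (-(rho T))
            = mFun (![S1, S2, S3, S4] k) (rho T) := by simp [map_neg]
        rw [this]
        exact mlt1 _ T hTne

end AuxProof

theorem statement13 {d : ℕ} (hd : 2 ≤ d) (P Q : PartialOrder (Fin d))
    (h : IsSimplicialPolytope (GammaCC P Q)) :
    (∀ A : Finset (Fin d), IsAC P A → A.card ≤ 2) ∧
    (∀ B : Finset (Fin d), IsAC Q B → B.card ≤ 2) := by
  exact noBigAC P Q h
end

section
/- Let P and Q be posets with |P| = |Q| = d ≥ 2. Suppose the 2-element antichains of P and Q are pairwise disjoint within each poset and compatible in the sense of the smoothness criterion (no index-set intersection of size 1 between a 2-antichain of P and one of Q), and neither poset has antichains of size ≥ 3. Then Γ(C(P), −C(Q)) splits as a free sum of copies of the interval [−1,1], del Pezzo 2-polytopes V_2 = conv(±e_1, ±e_2, ±(e_1+e_2)), and pseudo del Pezzo 2-polytopes Ṽ_2 = conv(±e_1, ±e_2, e_1+e_2), up to unimodular equivalence. -/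
open Set MeasureTheory Pointwise

open Classical in
lemma exists_perm_pairs {d : ℕ} (hd : 0 < d) (n : ℕ) (pr : ℕ → Finset (Fin d)) (hn : 2*n ≤ d)
    (hcard : ∀ j < n, (pr j).card = 2)
    (hdisj : ∀ i < n, ∀ j < n, i ≠ j → pr i ∩ pr j = ∅) :
    ∃ σ : Equiv.Perm (Fin d), ∀ j < n, ∀ x : Fin d,
      σ x ∈ pr j ↔ ((x:ℕ) = 2*j ∨ (x:ℕ) = 2*j+1) := by
  classical
  set q : ℕ → Finset (Fin d) := fun j => if j < n then pr j else {⟨0, hd⟩} with hq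
  have hqne : ∀ j, (q j).Nonempty := by
    intro j
    by_cases h : j < n
    · simp only [hq, if_pos h]
      exact Finset.card_pos.mp (by rw [hcard j h]; norm_num)
    · simp [hq, if_neg h]
  have hqpr : ∀ j < n, q j = pr j := fun j hj => by simp [hq, if_pos hj]
  set u : ℕ → Fin d := fun t => if t % 2 = 0 then (q (t/2)).min' (hqne _) else (q (t/2)).max' (hqne _) with hu
  have humem : ∀ t < 2*n, u t ∈ pr (t/2) := by
    intro t ht
    have h2 : t/2 < n := by omega
    rw [← hqpr _ h2]
    by_cases h : t % 2 = 0
    · simp only [hu, if_pos h]; exact Finset.min'_mem _ _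
    · simp only [hu, if_neg h]; exact Finset.max'_mem _ _
  have huinj : ∀ t₁ < 2*n, ∀ t₂ < 2*n, u t₁ = u t₂ → t₁ = t₂ := by
    intro t₁ h₁ t₂ h₂ he
    by_cases hj : t₁/2 = t₂/2
    · by_cases hm : t₁ % 2 = t₂ % 2
      · omega
      · exfalso
        have hlt : (q (t₁/2)).min' (hqne _) < (q (t₁/2)).max' (hqne _) := by
          apply Finset.min'_lt_max'_of_card
          rw [hqpr _ (by omega : t₁/2 < n), hcard _ (by omega)]
          omega
        rcases Nat.eq_zero_or_pos (t₁ % 2) with h0 | h0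
        · have h1' : t₂ % 2 ≠ 0 := by omega
          simp only [hu, if_pos h0, if_neg h1', ← hj] at he
          exact absurd he (ne_of_lt hlt)
        · have h0' : t₁ % 2 ≠ 0 := by omega
          have h1' : t₂ % 2 = 0 := by omega
          simp only [hu, if_neg h0', if_pos h1', ← hj] at he
          exact absurd he.symm (ne_of_lt hlt)
    · exfalso
      have := hdisj (t₁/2) (by omega) (t₂/2) (by omega) hj
      have hmem : u t₁ ∈ pr (t₁/2) ∩ pr (t₂/2) :=
        Finset.mem_inter.mpr ⟨humem t₁ h₁, he ▸ humem t₂ h₂⟩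
      rw [this] at hmem
      exact absurd hmem (Finset.notMem_empty _)
  set T : Finset (Fin d) := (Finset.range n).biUnion pr with hT
  have hprT : ∀ j < n, pr j ⊆ T := by
    intro j hj x hx
    exact Finset.mem_biUnion.mpr ⟨j, Finset.mem_range.mpr hj, hx⟩
  have huT : ∀ t < 2*n, u t ∈ T := fun t ht => hprT _ (by omega) (humem t ht)
  have hTcard : T.card = 2*n := by
    rw [hT, Finset.card_biUnion]
    · rw [Finset.sum_congr rfl (fun j hj => hcard j (Finset.mem_range.mp hj))]
      simp [mul_comm]
    · intro i hi j hj hij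
      exact Finset.disjoint_iff_inter_eq_empty.mpr
        (hdisj i (Finset.mem_range.mp hi) j (Finset.mem_range.mp hj) hij)
  set src : Finset (Fin d) := (Finset.univ : Finset (Fin (2*n))).map (Fin.castLEEmb hn) with hsrc
  have hsrcmem : ∀ x : Fin d, x ∈ src ↔ (x:ℕ) < 2*n := by
    intro x
    constructor
    · rintro hx
      obtain ⟨y, -, rfl⟩ := Finset.mem_map.mp hx
      exact y.2
    · intro hx
      exact Finset.mem_map.mpr ⟨⟨x, hx⟩, Finset.mem_univ _, rfl⟩
  have hsrccard : src.card = 2*n := by simp [hsrc]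
  have hccard : srcᶜ.card = Tᶜ.card := by
    rw [Finset.card_compl, Finset.card_compl, hsrccard, hTcard]
  set e := Finset.equivOfCardEq hccard with he
  set f : Fin d → Fin d := fun x =>
    if h : (x:ℕ) < 2*n then u x
    else ↑(e ⟨x, Finset.mem_compl.mpr (fun hc => h ((hsrcmem x).mp hc))⟩) with hf
  have heT : ∀ z, ((e z : Fin d)) ∉ T := fun z => Finset.mem_compl.mp (e z).2
  have finj : Function.Injective f := by
    intro a b hab
    by_cases ha : (a:ℕ) < 2*n <;> by_cases hb : (b:ℕ) < 2*n
    · simp only [hf, dif_pos ha, dif_pos hb] at hab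
      exact Fin.ext (huinj _ ha _ hb hab)
    · simp only [hf, dif_pos ha, dif_neg hb] at hab
      exact absurd (hab ▸ huT _ ha) (heT _)
    · simp only [hf, dif_neg ha, dif_pos hb] at hab
      exact absurd (hab ▸ huT _ hb) (heT _)
    · simp only [hf, dif_neg ha, dif_neg hb] at hab
      have h2 := e.injective (Subtype.coe_injective hab)
      exact congrArg Subtype.val h2
  obtain ⟨σ, hσ⟩ : ∃ σ : Equiv.Perm (Fin d), ∀ x, σ x = f x :=
    ⟨Equiv.ofBijective f (Finite.injective_iff_bijective.mp finj), fun x => rfl⟩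
  refine ⟨σ, fun j hj x => ?_⟩
  rw [hσ]
  constructor
  · intro hx
    by_cases h : (x:ℕ) < 2*n
    · rw [hf] at hx
      simp only [dif_pos h] at hx
      have hx2 := humem x h
      by_cases hj2 : (x:ℕ)/2 = j
      · omega
      · exfalso
        have hd2 := hdisj _ (by omega : (x:ℕ)/2 < n) j hj hj2
        have : u x ∈ pr ((x:ℕ)/2) ∩ pr j := Finset.mem_inter.mpr ⟨hx2, hx⟩
        rw [hd2] at this
        exact absurd this (Finset.notMem_empty _)
    · exfalso
      rw [hf] at hx
      simp only [dif_neg h] at hx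
      exact heT _ (hprT j hj hx)
  · intro hx
    have hlt : (x:ℕ) < 2*n := by omega
    rw [hf]
    simp only [dif_pos hlt]
    have hdiv : (x:ℕ)/2 = j := by omega
    rcases hx with hx | hx
    · have hm : (x:ℕ) % 2 = 0 := by omega
      simp only [hu, if_pos hm, hdiv, hqpr j hj]
      exact Finset.min'_mem _ _
    · have hm : ¬ (x:ℕ) % 2 = 0 := by omega
      simp only [hu, if_neg hm, hdiv, hqpr j hj]
      exact Finset.max'_mem _ _

theorem statement14 {d : ℕ} (hd : 2 ≤ d) (P Q : PartialOrder (Fin d))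
    (h1 : ∀ A B : Finset (Fin d), IsAC P A → IsAC P B → A.card = 2 → B.card = 2 →
      A ≠ B → A ∩ B = ∅)
    (h2 : ∀ A B : Finset (Fin d), IsAC Q A → IsAC Q B → A.card = 2 → B.card = 2 →
      A ≠ B → A ∩ B = ∅)
    (h3 : ∀ A B : Finset (Fin d), IsAC P A → IsAC Q B → A.card = 2 → B.card = 2 →
      (A ∩ B).card ≠ 1)
    (h4 : ∀ A : Finset (Fin d), IsAC P A → A.card ≤ 2)
    (h5 : ∀ B : Finset (Fin d), IsAC Q B → B.card ≤ 2) :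
    ∃ k l m : ℕ, 2 * k + 2 * l + 2 * m ≤ d ∧
      UnimodEquiv (GammaCC P Q) (modelSplit d k l m) := by
  classical
  set SP : Finset (Finset (Fin d)) :=
    Finset.univ.filter (fun A : Finset (Fin d) => IsAC P A ∧ A.card = 2) with hSP
  set SQ : Finset (Finset (Fin d)) :=
    Finset.univ.filter (fun A : Finset (Fin d) => IsAC Q A ∧ A.card = 2) with hSQ
  have hSPmem : ∀ A, A ∈ SP ↔ IsAC P A ∧ A.card = 2 := by intro A; simp [hSP]
  have hSQmem : ∀ A, A ∈ SQ ↔ IsAC Q A ∧ A.card = 2 := by intro A; simp [hSQ]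
  set lC := (SP ∩ SQ).toList with hlC
  set lL := (SP \ SQ).toList with hlL
  set lM := (SQ \ SP).toList with hlM
  set k := lC.length with hk
  set l := lL.length with hl
  set m := lM.length with hm
  set n := k + l + m with hn
  set pr : ℕ → Finset (Fin d) := fun j =>
    if j < k then lC.getD j ∅ else if j < k + l then lL.getD (j-k) ∅
    else lM.getD (j-k-l) ∅ with hpr
  have hgetC : ∀ j (h : j < k), pr j = lC[j] := by
    intro j h
    simp only [hpr, if_pos h]
    exact List.getD_eq_getElem lC ∅ h
  have hgetL : ∀ j (h1 : k ≤ j) (h2 : j < k + l), pr j = lL[j-k]'(by omega) := by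
    intro j hj1 hj2
    simp only [hpr, if_neg (by omega : ¬ j < k), if_pos hj2]
    exact List.getD_eq_getElem lL ∅ (by omega)
  have hgetM : ∀ j (h1 : k + l ≤ j) (h2 : j < n), pr j = lM[j-k-l]'(by omega) := by
    intro j hj1 hj2
    simp only [hpr, if_neg (by omega : ¬ j < k), if_neg (by omega : ¬ j < k + l)]
    exact List.getD_eq_getElem lM ∅ (by omega)
  have hprC : ∀ j, j < k → pr j ∈ SP ∩ SQ := by
    intro j h
    rw [hgetC j h, ← Finset.mem_toList]
    exact List.getElem_mem _
  have hprL : ∀ j, k ≤ j → j < k + l → pr j ∈ SP \ SQ := by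
    intro j h1 h2
    rw [hgetL j h1 h2, ← Finset.mem_toList]
    exact List.getElem_mem _
  have hprM : ∀ j, k + l ≤ j → j < n → pr j ∈ SQ \ SP := by
    intro j h1 h2
    rw [hgetM j h1 h2, ← Finset.mem_toList]
    exact List.getElem_mem _
  have hprPQ : ∀ j < n, pr j ∈ SP ∪ SQ := by
    intro j hj
    by_cases hc : j < k
    · exact Finset.mem_union.mpr (Or.inl (Finset.mem_inter.mp (hprC j hc)).1)
    · by_cases hc2 : j < k + l
      · exact Finset.mem_union.mpr (Or.inl (Finset.mem_sdiff.mp (hprL j (by omega) hc2)).1)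
      · exact Finset.mem_union.mpr (Or.inr (Finset.mem_sdiff.mp (hprM j (by omega) hj)).1)
  have hcard2 : ∀ j < n, (pr j).card = 2 := by
    intro j hj
    rcases Finset.mem_union.mp (hprPQ j hj) with h | h
    · exact ((hSPmem _).mp h).2
    · exact ((hSQmem _).mp h).2
  have hprinj : ∀ i, i < n → ∀ j, j < n → i ≠ j → pr i ≠ pr j := by
    intro i hi j hj hij heq
    have hblockne : ∀ a b : Finset (Fin d), a ∈ SP ∩ SQ → b ∈ SP \ SQ → a ≠ b := by
      rintro a b ha hb rfl
      exact (Finset.mem_sdiff.mp hb).2 (Finset.mem_inter.mp ha).2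
    have hblockne2 : ∀ a b : Finset (Fin d), a ∈ SP ∩ SQ → b ∈ SQ \ SP → a ≠ b := by
      rintro a b ha hb rfl
      exact (Finset.mem_sdiff.mp hb).2 (Finset.mem_inter.mp ha).1
    have hblockne3 : ∀ a b : Finset (Fin d), a ∈ SP \ SQ → b ∈ SQ \ SP → a ≠ b := by
      rintro a b ha hb rfl
      exact (Finset.mem_sdiff.mp hb).2 (Finset.mem_sdiff.mp ha).1
    by_cases hik : i < k <;> by_cases hjk : j < k
    · rw [hgetC i hik, hgetC j hjk] at heq
      exact hij ((SP ∩ SQ).nodup_toList.getElem_inj_iff.mp heq)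
    · by_cases hjl : j < k + l
      · exact hblockne _ _ (hprC i hik) (hprL j (by omega) hjl) heq
      · exact hblockne2 _ _ (hprC i hik) (hprM j (by omega) hj) heq
    · by_cases hil : i < k + l
      · exact hblockne _ _ (hprC j hjk) (hprL i (by omega) hil) heq.symm
      · exact hblockne2 _ _ (hprC j hjk) (hprM i (by omega) hi) heq.symm
    · by_cases hil : i < k + l <;> by_cases hjl : j < k + l
      · rw [hgetL i (by omega) hil, hgetL j (by omega) hjl] at heq
        have := (SP \ SQ).nodup_toList.getElem_inj_iff.mp heq
        omega
      · exact hblockne3 _ _ (hprL i (by omega) hil) (hprM j (by omega) hj) heq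
      · exact hblockne3 _ _ (hprL j (by omega) hjl) (hprM i (by omega) hi) heq.symm
      · rw [hgetM i (by omega) hi, hgetM j (by omega) hj] at heq
        have := (SQ \ SP).nodup_toList.getElem_inj_iff.mp heq
        omega
  have hinter2 : ∀ A B : Finset (Fin d), A.card = 2 → B.card = 2 → A ≠ B →
      (A ∩ B).card ≠ 1 → A ∩ B = ∅ := by
    intro A B hA hB hne h1'
    have hsubA : A ∩ B ⊆ A := Finset.inter_subset_left
    have hle : (A ∩ B).card ≤ 2 := hA ▸ Finset.card_le_card hsubA
    rcases (by omega : (A ∩ B).card = 0 ∨ (A ∩ B).card = 2) with h | h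
    · exact Finset.card_eq_zero.mp h
    · exfalso
      have e1 : A ∩ B = A := Finset.eq_of_subset_of_card_le hsubA (by omega)
      have e2 : A ∩ B = B := Finset.eq_of_subset_of_card_le Finset.inter_subset_right (by omega)
      exact hne (e1 ▸ e2)
  have hdisjPairs : ∀ i < n, ∀ j < n, i ≠ j → pr i ∩ pr j = ∅ := by
    intro i hi j hj hij
    have hne := hprinj i hi j hj hij
    rcases Finset.mem_union.mp (hprPQ i hi) with hA | hA <;>
      rcases Finset.mem_union.mp (hprPQ j hj) with hB | hB
    · exact h1 _ _ ((hSPmem _).mp hA).1 ((hSPmem _).mp hB).1 ((hSPmem _).mp hA).2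
        ((hSPmem _).mp hB).2 hne
    · exact hinter2 _ _ ((hSPmem _).mp hA).2 ((hSQmem _).mp hB).2 hne
        (h3 _ _ ((hSPmem _).mp hA).1 ((hSQmem _).mp hB).1 ((hSPmem _).mp hA).2 ((hSQmem _).mp hB).2)
    · refine hinter2 _ _ ((hSQmem _).mp hA).2 ((hSPmem _).mp hB).2 hne ?_
      rw [Finset.inter_comm]
      exact h3 _ _ ((hSPmem _).mp hB).1 ((hSQmem _).mp hA).1 ((hSPmem _).mp hB).2 ((hSQmem _).mp hA).2
    · exact h2 _ _ ((hSQmem _).mp hA).1 ((hSQmem _).mp hB).1 ((hSQmem _).mp hA).2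
        ((hSQmem _).mp hB).2 hne
  have hd2n : 2 * n ≤ d := by
    have hdisj' : ∀ i ∈ Finset.range n, ∀ j ∈ Finset.range n, i ≠ j → Disjoint (pr i) (pr j) := by
      intro i hi j hj hij
      exact Finset.disjoint_iff_inter_eq_empty.mpr
        (hdisjPairs i (Finset.mem_range.mp hi) j (Finset.mem_range.mp hj) hij)
    have hcardT : ((Finset.range n).biUnion pr).card = 2 * n := by
      rw [Finset.card_biUnion hdisj']
      rw [Finset.sum_congr rfl (fun j hj => hcard2 j (Finset.mem_range.mp hj))]
      simp [mul_comm]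
    have := Finset.card_le_univ ((Finset.range n).biUnion pr)
    simp only [Finset.card_univ, Fintype.card_fin] at this
    omega
  obtain ⟨σ, hσ⟩ := exists_perm_pairs (by omega) n pr hd2n hcard2 hdisjPairs
  refine ⟨k, l, m, by omega, ?_⟩
  -- basic computation lemmas
  have hrho0 : rho (∅ : Finset (Fin d)) = (0 : Fin d → ℝ) := by
    funext i; simp [rho]
  have hsingleσ : ∀ a : Fin d, (rho {a}) ∘ ⇑σ = unitVec d ((σ.symm a : Fin d) : ℕ) := by
    intro a; funext i
    show (if σ i ∈ ({a} : Finset (Fin d)) then (1:ℝ) else 0) = _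
    rw [unitVec]
    refine if_congr ?_ rfl rfl
    rw [Finset.mem_singleton, Fin.val_eq_val, Equiv.eq_symm_apply]
  have hpairσ : ∀ j, j < n → (rho (pr j)) ∘ ⇑σ = pairVec d (2*j) := by
    intro j hj; funext i
    show (if σ i ∈ pr j then (1:ℝ) else 0) = _
    rw [pairVec]
    exact if_congr (hσ j hj i) rfl rfl
  have hACe : ∀ R : PartialOrder (Fin d), IsAC R ∅ := by
    intro R i hi; exact absurd hi (Finset.notMem_empty _)
  have hACs : ∀ (R : PartialOrder (Fin d)) (a : Fin d), IsAC R {a} := by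
    intro R a i hi j hj hij
    rw [Finset.mem_singleton] at hi hj
    exact absurd (hi.trans hj.symm) hij
  -- index recovery
  have hidxC : ∀ A ∈ SP ∩ SQ, ∃ j < k, pr j = A := by
    intro A hA
    obtain ⟨j, hj, hget⟩ := List.mem_iff_getElem.mp (Finset.mem_toList.mpr hA)
    exact ⟨j, hj, (hgetC j hj).trans hget⟩
  have hidxL : ∀ A ∈ SP \ SQ, ∃ j < n, k ≤ j ∧ j < k + l ∧ pr j = A := by
    intro A hA
    obtain ⟨j, hj, hget⟩ := List.mem_iff_getElem.mp (Finset.mem_toList.mpr hA)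
    have hj' : j < l := hj
    refine ⟨k + j, by omega, by omega, by omega, ?_⟩
    rw [hgetL (k+j) (by omega) (by omega)]
    simpa [Nat.add_sub_cancel_left] using hget
  have hidxM : ∀ A ∈ SQ \ SP, ∃ j < n, k + l ≤ j ∧ pr j = A := by
    intro A hA
    obtain ⟨j, hj, hget⟩ := List.mem_iff_getElem.mp (Finset.mem_toList.mpr hA)
    have hj' : j < m := hj
    refine ⟨k + l + j, by omega, by omega, ?_⟩
    rw [hgetM (k+l+j) (by omega) (by omega)]
    simpa [show k + l + j - k - l = j by omega] using hget
  -- the matrix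
  set U : Matrix (Fin d) (Fin d) ℤ := Matrix.of (fun i j => if σ i = j then 1 else 0) with hU
  have hUperm : U = σ.toPEquiv.toMatrix := by
    ext i j
    simp [hU, PEquiv.toMatrix_apply, Equiv.toPEquiv_apply, Option.mem_def, eq_comm]
  have hdet : IsUnit U.det := by
    rw [hUperm, Matrix.det_permutation]
    exact (Equiv.Perm.sign σ).isUnit
  have hmul : (fun v : Fin d → ℝ => (U.map (fun z : ℤ => (z : ℝ))).mulVec v)
      = fun v : Fin d → ℝ => v ∘ ⇑σ := by
    funext v i
    show ∑ j, (U.map (fun z : ℤ => (z : ℝ))) i j * v j = v (σ i)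
    have hterm : ∀ j, (U.map (fun z : ℤ => (z : ℝ))) i j * v j = if σ i = j then v j else 0 := by
      intro j
      by_cases h : σ i = j <;> simp [hU, Matrix.map_apply, Matrix.of_apply, h]
    rw [Finset.sum_congr rfl (fun j _ => hterm j), Finset.sum_ite_eq]
    simp
  refine ⟨U, hdet, ?_⟩
  rw [hmul]
  set g : (Fin d → ℝ) → (Fin d → ℝ) := fun v => v ∘ ⇑σ with hgdef
  set G : Set (Fin d → ℝ) := acVerts P ∪ (fun v => -v) '' acVerts Q with hG
  set Hs : Set (Fin d → ℝ) :=
    {x | ∃ i : Fin d, x = unitVec d (i : ℕ) ∨ x = -unitVec d (i : ℕ)} ∪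
    {x | ∃ i < k, x = pairVec d (2 * i) ∨ x = -pairVec d (2 * i)} ∪
    {x | ∃ i < l, x = pairVec d (2 * k + 2 * i)} ∪
    {x | ∃ i < m, x = -pairVec d (2 * k + 2 * l + 2 * i)} with hHs
  have himg : g '' (convexHull ℝ G) = convexHull ℝ (g '' G) :=
    (LinearMap.funLeft ℝ ℝ ⇑σ).image_convexHull G
  show convexHull ℝ Hs = g '' (convexHull ℝ G)
  rw [himg]
  have hmemS1 : ∀ i : Fin d, unitVec d (i : ℕ) ∈ Hs := by
    intro i
    exact Set.mem_union_left _ (Set.mem_union_left _ (Set.mem_union_left _ ⟨i, Or.inl rfl⟩))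
  have hmemS1' : ∀ i : Fin d, -unitVec d (i : ℕ) ∈ Hs := by
    intro i
    exact Set.mem_union_left _ (Set.mem_union_left _ (Set.mem_union_left _ ⟨i, Or.inr rfl⟩))
  have hmemS2 : ∀ j, j < k → pairVec d (2*j) ∈ Hs ∧ -pairVec d (2*j) ∈ Hs := by
    intro j hj
    exact ⟨Set.mem_union_left _ (Set.mem_union_left _ (Set.mem_union_right _ ⟨j, hj, Or.inl rfl⟩)),
      Set.mem_union_left _ (Set.mem_union_left _ (Set.mem_union_right _ ⟨j, hj, Or.inr rfl⟩))⟩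
  have hmemS3 : ∀ j, j < l → pairVec d (2*k + 2*j) ∈ Hs := by
    intro j hj
    exact Set.mem_union_left _ (Set.mem_union_right _ ⟨j, hj, rfl⟩)
  have hmemS4 : ∀ j, j < m → -pairVec d (2*k + 2*l + 2*j) ∈ Hs := by
    intro j hj
    exact Set.mem_union_right _ ⟨j, hj, rfl⟩
  have h0mem : (0 : Fin d → ℝ) ∈ convexHull ℝ Hs := by
    have hx := subset_convexHull ℝ Hs (hmemS1 ⟨0, by omega⟩)
    have hy := subset_convexHull ℝ Hs (hmemS1' ⟨0, by omega⟩)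
    have hseg := (convex_convexHull ℝ Hs) hx hy
      (by norm_num : (0:ℝ) ≤ 1/2) (by norm_num : (0:ℝ) ≤ 1/2) (by norm_num : (1:ℝ)/2 + 1/2 = 1)
    convert hseg using 1
    rw [smul_neg]
    abel
  have hfor : g '' G ⊆ convexHull ℝ Hs := by
    rintro y ⟨x, hx, rfl⟩
    rcases hx with ⟨A, hA, rfl⟩ | ⟨z, ⟨A, hA, rfl⟩, rfl⟩
    · have hc := h4 A hA
      rcases (by omega : A.card = 0 ∨ A.card = 1 ∨ A.card = 2) with h0 | h1' | h2'
      · rw [Finset.card_eq_zero.mp h0]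
        show (rho (∅ : Finset (Fin d))) ∘ ⇑σ ∈ _
        rw [hrho0]
        exact h0mem
      · obtain ⟨a, rfl⟩ := Finset.card_eq_one.mp h1'
        show (rho {a}) ∘ ⇑σ ∈ _
        rw [hsingleσ]
        exact subset_convexHull ℝ Hs (hmemS1 _)
      · have hmemSP : A ∈ SP := (hSPmem A).mpr ⟨hA, h2'⟩
        show (rho A) ∘ ⇑σ ∈ _
        by_cases hq : A ∈ SQ
        · obtain ⟨j, hj, hpj⟩ := hidxC A (Finset.mem_inter.mpr ⟨hmemSP, hq⟩)
          rw [← hpj, hpairσ j (by omega)]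
          exact subset_convexHull ℝ Hs (hmemS2 j hj).1
        · obtain ⟨j, hjn, hj1, hj2, hpj⟩ := hidxL A (Finset.mem_sdiff.mpr ⟨hmemSP, hq⟩)
          rw [← hpj, hpairσ j hjn, show 2*j = 2*k + 2*(j-k) by omega]
          exact subset_convexHull ℝ Hs (hmemS3 (j-k) (by omega))
    · have hc := h5 A hA
      rcases (by omega : A.card = 0 ∨ A.card = 1 ∨ A.card = 2) with h0 | h1' | h2'
      · rw [Finset.card_eq_zero.mp h0]
        show -((rho (∅ : Finset (Fin d))) ∘ ⇑σ) ∈ _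
        rw [hrho0]
        simpa using h0mem
      · obtain ⟨a, rfl⟩ := Finset.card_eq_one.mp h1'
        show -((rho {a}) ∘ ⇑σ) ∈ _
        rw [hsingleσ]
        exact subset_convexHull ℝ Hs (hmemS1' _)
      · have hmemSQ : A ∈ SQ := (hSQmem A).mpr ⟨hA, h2'⟩
        show -((rho A) ∘ ⇑σ) ∈ _
        by_cases hp : A ∈ SP
        · obtain ⟨j, hj, hpj⟩ := hidxC A (Finset.mem_inter.mpr ⟨hp, hmemSQ⟩)
          rw [← hpj, hpairσ j (by omega)]
          exact subset_convexHull ℝ Hs (hmemS2 j hj).2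
        · obtain ⟨j, hjn, hj1, hpj⟩ := hidxM A (Finset.mem_sdiff.mpr ⟨hmemSQ, hp⟩)
          rw [← hpj, hpairσ j hjn, show 2*j = 2*k + 2*l + 2*(j-k-l) by omega]
          exact subset_convexHull ℝ Hs (hmemS4 (j-k-l) (by omega))
  have hback : Hs ⊆ g '' G := by
    rintro y hy
    rcases hy with ((⟨i, hi | hi⟩ | ⟨i, hik, hi | hi⟩) | ⟨i, hil, hi⟩) | ⟨i, him, hi⟩
    · refine ⟨rho {σ i}, Or.inl ⟨{σ i}, hACs P _, rfl⟩, ?_⟩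
      rw [hi]
      show (rho {σ i}) ∘ ⇑σ = _
      rw [hsingleσ, Equiv.symm_apply_apply]
    · refine ⟨-(rho {σ i}), Or.inr ⟨rho {σ i}, ⟨{σ i}, hACs Q _, rfl⟩, rfl⟩, ?_⟩
      rw [hi]
      show -((rho {σ i}) ∘ ⇑σ) = _
      rw [hsingleσ, Equiv.symm_apply_apply]
    · have hmemC := hprC i hik
      refine ⟨rho (pr i), Or.inl ⟨pr i, ((hSPmem _).mp (Finset.mem_inter.mp hmemC).1).1, rfl⟩, ?_⟩
      rw [hi]
      show (rho (pr i)) ∘ ⇑σ = _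
      rw [hpairσ i (by omega)]
    · have hmemC := hprC i hik
      refine ⟨-(rho (pr i)), Or.inr ⟨rho (pr i),
        ⟨pr i, ((hSQmem _).mp (Finset.mem_inter.mp hmemC).2).1, rfl⟩, rfl⟩, ?_⟩
      rw [hi]
      show -((rho (pr i)) ∘ ⇑σ) = _
      rw [hpairσ i (by omega)]
    · have hmemL := hprL (k+i) (by omega) (by omega)
      refine ⟨rho (pr (k+i)), Or.inl ⟨pr (k+i),
        ((hSPmem _).mp (Finset.mem_sdiff.mp hmemL).1).1, rfl⟩, ?_⟩
      rw [hi]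
      show (rho (pr (k+i))) ∘ ⇑σ = _
      rw [hpairσ (k+i) (by omega), show 2*(k+i) = 2*k + 2*i by omega]
    · have hmemM := hprM (k+l+i) (by omega) (by omega)
      refine ⟨-(rho (pr (k+l+i))), Or.inr ⟨rho (pr (k+l+i)),
        ⟨pr (k+l+i), ((hSQmem _).mp (Finset.mem_sdiff.mp hmemM).1).1, rfl⟩, rfl⟩, ?_⟩
      rw [hi]
      show -((rho (pr (k+l+i))) ∘ ⇑σ) = _
      rw [hpairσ (k+l+i) (by omega), show 2*(k+l+i) = 2*k + 2*l + 2*i by omega]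
  apply Set.Subset.antisymm
  · exact convexHull_min (hback.trans (subset_convexHull ℝ _)) (convex_convexHull ℝ _)
  · exact convexHull_min hfor (convex_convexHull ℝ _)
end
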